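/- arXiv:1811.11696 — 4 statements merged into one kernel-verified Lean document; each statement's English description precedes it below -/
import Mathlib

section
/- Let k be a field of characteristic ≠ 2, V a finite-dimensional k-vector space, and Q a quadratic form on V with polar bilinear form b. Then the Jacobson radical of the Clifford algebra C(Q) equals the two-sided ideal of C(Q) generated by ι(rad(b)), the image under the canonical linear map ι : V → C(Q) of the radical rad(b) of b. -/
open CliffordAlgebra

/-- `List.Sorted` as in older Mathlib. -/
def List.Sorted {α : Type*} (r : α → α → Prop) (l : List α) : Prop := List.Pairwise r l

@[simp] theorem List.sorted_nil {α : Type*} {r : α → α → Prop} : ([] : List α).Sorted r :=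
  List.Pairwise.nil

@[simp] theorem List.sorted_singleton {α : Type*} {r : α → α → Prop} (a : α) : [a].Sorted r :=
  List.pairwise_singleton r a

theorem List.sorted_cons {α : Type*} {r : α → α → Prop} {a : α} {l : List α} :
    (a :: l).Sorted r ↔ (∀ b ∈ l, r a b) ∧ l.Sorted r :=
  List.pairwise_cons

theorem List.Sorted.nodup {α : Type*} {r : α → α → Prop} [Std.Irrefl r] {l : List α}
    (h : l.Sorted r) : l.Nodup :=
  List.Pairwise.nodup h

theorem List.Sorted.sublist {α : Type*} {r : α → α → Prop} {l₁ l₂ : List α} (hs : List.Sublist l₁ l₂)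
    (h : l₂.Sorted r) : l₁.Sorted r :=
  List.Pairwise.sublist hs h

theorem List.eq_of_perm_of_sorted {α : Type*} {r : α → α → Prop} [IsAntisymm α r]
    {l₁ l₂ : List α} (hp : l₁.Perm l₂) (h₁ : l₁.Sorted r) (h₂ : l₂.Sorted r) : l₁ = l₂ :=
  List.Perm.eq_of_pairwise (fun _ _ _ _ h h' => antisymm h h') h₁ h₂ hp

theorem Finset.sort_sorted_lt {α : Type*} [LinearOrder α] (s : Finset α) :
    (s.sort (· ≤ ·)).Sorted (· < ·) :=
  List.sortedLT_iff_pairwise.1 s.sortedLT_sort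


section RingLemmas
variable {R : Type*} [Ring R]

lemma jac_left_inv {x : R} (hx : x ∈ Ideal.jacobson (⊥ : Ideal R)) (y : R) :
    ∃ z, z * (y * x + 1) = 1 := by
  obtain ⟨z, hz⟩ := Ideal.mem_jacobson_iff.1 hx y
  rw [Ideal.mem_bot, sub_eq_zero] at hz
  exact ⟨z, by rw [mul_add, mul_one, ← mul_assoc, hz]⟩

lemma jac_isUnit {x : R} (hx : x ∈ Ideal.jacobson (⊥ : Ideal R)) (y : R) :
    IsUnit (1 + y * x) := by
  obtain ⟨z, hz⟩ := jac_left_inv hx y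
  have hyx : y * x ∈ Ideal.jacobson (⊥ : Ideal R) := Ideal.mul_mem_left _ y hx
  have hz' : z = (-z) * (y * x) + 1 := by
    have : z * (y * x) + z = 1 := by rw [← hz]; noncomm_ring
    rw [neg_mul, eq_comm, add_comm, ← sub_eq_add_neg, sub_eq_iff_eq_add]
    rw [add_comm] at this
    exact this.symm
  obtain ⟨z₂, hz₂⟩ := jac_left_inv hyx (-z)
  rw [← hz'] at hz₂
  have h1 : (y * x + 1) * z = 1 := by
    have : z₂ = y * x + 1 := by
      calc z₂ = z₂ * (z * (y * x + 1)) := by rw [hz, mul_one]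
        _ = (z₂ * z) * (y * x + 1) := by rw [mul_assoc]
        _ = y * x + 1 := by rw [hz₂, one_mul]
    rw [← this, hz₂]
  exact ⟨⟨1 + y * x, z, by rw [add_comm]; exact h1, by rw [add_comm]; exact hz⟩, rfl⟩

lemma isUnit_one_add_swap {a b : R} (h : IsUnit (1 + a * b)) : IsUnit (1 + b * a) := by
  obtain ⟨⟨u, v, huv, hvu⟩, hu⟩ := h
  have hu' : (u : R) = 1 + a * b := hu
  subst hu'
  refine ⟨⟨1 + b * a, 1 - b * v * a, ?_, ?_⟩, rfl⟩
  · have h : (1 + a * b) * v = 1 := huv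
    calc (1 + b * a) * (1 - b * v * a)
        = 1 + b * a - b * ((1 + a * b) * v) * a := by noncomm_ring
      _ = 1 := by rw [h]; noncomm_ring
  · have h : v * (1 + a * b) = 1 := hvu
    calc (1 - b * v * a) * (1 + b * a)
        = 1 + b * a - b * (v * (1 + a * b)) * a := by noncomm_ring
      _ = 1 := by rw [h]; noncomm_ring

lemma jac_mul_right {x : R} (hx : x ∈ Ideal.jacobson (⊥ : Ideal R)) (r : R) :
    x * r ∈ Ideal.jacobson (⊥ : Ideal R) := by
  rw [Ideal.mem_jacobson_iff]
  intro y
  have h1 : IsUnit (1 + r * (y * x)) := by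
    have := jac_isUnit hx (r * y)
    rwa [mul_assoc] at this
  have h2 : IsUnit (1 + y * x * r) := isUnit_one_add_swap h1
  obtain ⟨⟨u, v, huv, hvu⟩, hu⟩ := h2
  have hu' : (u : R) = 1 + y * x * r := hu
  refine ⟨v, ?_⟩
  rw [Ideal.mem_bot, sub_eq_zero]
  have : v * (1 + y * x * r) = 1 := by rw [← hu']; exact hvu
  calc v * y * (x * r) + v = v * (1 + y * x * r) := by noncomm_ring
    _ = 1 := this

lemma jac_equiv_mem (e : R ≃+* R) {x : R} (hx : x ∈ Ideal.jacobson (⊥ : Ideal R)) :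
    e x ∈ Ideal.jacobson (⊥ : Ideal R) := by
  rw [Ideal.mem_jacobson_iff]
  intro y
  obtain ⟨z, hz⟩ := Ideal.mem_jacobson_iff.1 hx (e.symm y)
  rw [Ideal.mem_bot] at hz
  refine ⟨e z, ?_⟩
  rw [Ideal.mem_bot]
  have := congrArg e hz
  simpa [map_mul, map_sub, map_add] using this

end RingLemmas


section Det
variable {K : Type*} [Field K] {W : Type*} [AddCommGroup W] [Module K W]
variable {n : ℕ} (B : Module.Basis (Fin n) K W)

local notation "E" => CliffordAlgebra (0 : QuadraticForm K W)
local notation "ιE" => CliffordAlgebra.ι (0 : QuadraticForm K W)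

/-- product of basis monomials -/
noncomputable def wp (l : List (Fin n)) : CliffordAlgebra (0 : QuadraticForm K W) :=
  (l.map fun i => ιE (B i)).prod

@[simp] lemma wp_nil : wp B [] = 1 := rfl

lemma wp_cons (i : Fin n) (l : List (Fin n)) : wp B (i :: l) = ιE (B i) * wp B l := by
  simp [wp]

lemma wp_append (l l' : List (Fin n)) : wp B (l ++ l') = wp B l * wp B l' := by
  simp [wp]

lemma ext_anticomm (x y : W) : ιE x * ιE y = -(ιE y * ιE x) := by
  have h := CliffordAlgebra.ι_mul_ι_add_swap (Q := (0 : QuadraticForm K W)) x y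
  have hp : QuadraticMap.polar (0 : QuadraticForm K W) x y = 0 := by
    simp [QuadraticMap.polar]
  rw [hp, map_zero] at h
  exact eq_neg_of_add_eq_zero_left h

lemma ins0 : ∀ (l : List (Fin n)), ∀ i ∈ l, ιE (B i) * wp B l = 0 := by
  intro l
  induction l with
  | nil => intro i hi; simp at hi
  | cons j l ih =>
    intro i hi
    rw [wp_cons, ← mul_assoc]
    rcases List.mem_cons.1 hi with h | h
    · subst h
      rw [CliffordAlgebra.ι_sq_scalar]
      simp
    · rw [ext_anticomm, neg_mul, mul_assoc, ih i h, mul_zero, neg_zero]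

lemma ins : ∀ (l : List (Fin n)), l.Sorted (· < ·) → ∀ i : Fin n, i ∉ l →
    ∃ (c : K) (l' : List (Fin n)), c ≠ 0 ∧ l'.Sorted (· < ·) ∧
      (∀ x, x ∈ l' ↔ x = i ∨ x ∈ l) ∧ l'.length = l.length + 1 ∧
      ιE (B i) * wp B l = c • wp B l' := by
  intro l
  induction l with
  | nil =>
    intro _ i _
    exact ⟨1, [i], one_ne_zero, List.sorted_singleton i, by simp, by simp,
      by rw [wp_cons, wp_nil, mul_one, one_smul]⟩
  | cons j l ih =>
    intro hsort i hi
    have hij : i ≠ j := fun h => hi (h ▸ List.mem_cons_self)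
    have hil : i ∉ l := fun h => hi (List.mem_cons_of_mem j h)
    have hsl : l.Sorted (· < ·) := (List.sorted_cons.1 hsort).2
    have hjl : ∀ x ∈ l, j < x := (List.sorted_cons.1 hsort).1
    rcases lt_or_gt_of_ne hij with hlt | hgt
    · refine ⟨1, i :: j :: l, one_ne_zero, ?_, by simp, by simp, by simp [wp_cons]⟩
      exact List.sorted_cons.2 ⟨fun x hx => by
        rcases List.mem_cons.1 hx with h | h
        · exact h ▸ hlt
        · exact hlt.trans (hjl x h), hsort⟩
    · obtain ⟨c, l', hc, hsl', hmem, hlen, heq⟩ := ih hsl i hil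
      refine ⟨-c, j :: l', neg_ne_zero.2 hc, ?_, ?_, by simp [hlen], ?_⟩
      · refine List.sorted_cons.2 ⟨fun x hx => ?_, hsl'⟩
        rcases (hmem x).1 hx with h | h
        · exact h ▸ hgt
        · exact hjl x h
      · intro x
        simp only [List.mem_cons, hmem x]
        tauto
      · rw [wp_cons, ← mul_assoc, ext_anticomm (B i) (B j), neg_mul, mul_assoc, heq,
          wp_cons, mul_smul_comm, ← neg_smul]

@[simp] lemma wp_singleton (i : Fin n) : wp B [i] = ιE (B i) := by simp [wp]

lemma wp_mem_span (l : List (Fin n)) :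
    wp B l ∈ Submodule.span K
      {v : CliffordAlgebra (0 : QuadraticForm K W) |
        ∃ l' : List (Fin n), l'.Sorted (· < ·) ∧ v = wp B l'} := by
  induction l with
  | nil => exact Submodule.subset_span ⟨[], by simp, rfl⟩
  | cons i l ih =>
    rw [wp_cons]
    refine Submodule.span_induction (p := fun x _ => ιE (B i) * x ∈ Submodule.span K
      {v : CliffordAlgebra (0 : QuadraticForm K W) |
        ∃ l' : List (Fin n), l'.Sorted (· < ·) ∧ v = wp B l'}) ?_ ?_ ?_ ?_ ih
    · rintro x ⟨l', hl', rfl⟩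
      by_cases hmem : i ∈ l'
      · rw [ins0 B l' i hmem]; exact Submodule.zero_mem _
      · obtain ⟨c, l'', hc, hs, _, _, heq⟩ := ins B l' hl' i hmem
        rw [heq]
        exact Submodule.smul_mem _ _ (Submodule.subset_span ⟨l'', hs, rfl⟩)
    · simp
    · intro x y _ _ hx hy
      rw [mul_add]; exact Submodule.add_mem _ hx hy
    · intro a x _ hx
      rw [mul_smul_comm]; exact Submodule.smul_mem _ _ hx

lemma mem_span_sorted (u : CliffordAlgebra (0 : QuadraticForm K W)) :
    u ∈ Submodule.span K
      {v : CliffordAlgebra (0 : QuadraticForm K W) |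
        ∃ l' : List (Fin n), l'.Sorted (· < ·) ∧ v = wp B l'} := by
  set S := {v : CliffordAlgebra (0 : QuadraticForm K W) |
        ∃ l' : List (Fin n), l'.Sorted (· < ·) ∧ v = wp B l'} with hS
  induction u using CliffordAlgebra.induction with
  | algebraMap r =>
    rw [Algebra.algebraMap_eq_smul_one]
    exact Submodule.smul_mem _ _ (Submodule.subset_span ⟨[], by simp, rfl⟩)
  | ι x =>
    have hx : x = ∑ i, B.repr x i • B i := (B.sum_repr x).symm
    rw [hx, map_sum]
    refine Submodule.sum_mem _ fun i _ => ?_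
    rw [map_smul]
    exact Submodule.smul_mem _ _ (Submodule.subset_span ⟨[i], by simp, by simp⟩)
  | mul u v hu hv =>
    refine Submodule.span_induction (p := fun x _ => x * v ∈ Submodule.span K S) ?_ ?_ ?_ ?_ hu
    · rintro x ⟨l, hl, rfl⟩
      refine Submodule.span_induction (p := fun y _ => wp B l * y ∈ Submodule.span K S)
        ?_ ?_ ?_ ?_ hv
      · rintro y ⟨l', hl', rfl⟩
        rw [← wp_append]
        exact wp_mem_span B (l ++ l')
      · simp
      · intro a b _ _ ha hb; rw [mul_add]; exact Submodule.add_mem _ ha hb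
      · intro a y _ hy; rw [mul_smul_comm]; exact Submodule.smul_mem _ _ hy
    · simp
    · intro a b _ _ ha hb; rw [add_mul]; exact Submodule.add_mem _ ha hb
    · intro a x _ hx; rw [smul_mul_assoc]; exact Submodule.smul_mem _ _ hx
  | add u v hu hv => exact Submodule.add_mem _ hu hv

lemma coord_basis (i j : Fin n) : B.coord i (B j) = if j = i then 1 else 0 := by
  simp [Module.Basis.coord_apply, Module.Basis.repr_self, Finsupp.single_apply]

lemma contract_wp_not_mem (l : List (Fin n)) (i : Fin n) (hi : i ∉ l) :
    contractLeft (Q := (0 : QuadraticForm K W)) (B.coord i) (wp B l) = 0 := by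
  induction l with
  | nil => simpa [wp_nil] using contractLeft_one (Q := (0 : QuadraticForm K W)) (B.coord i)
  | cons j l ih =>
    have hij : j ≠ i := fun h => hi (h ▸ List.mem_cons_self)
    have hil : i ∉ l := fun h => hi (List.mem_cons_of_mem j h)
    rw [wp_cons, contractLeft_ι_mul, coord_basis, if_neg hij, zero_smul, zero_sub,
      ih hil, mul_zero, neg_zero]

lemma contract_wp_mem (l : List (Fin n)) (hnd : l.Nodup) (i : Fin n) (hi : i ∈ l) :
    ∃ c : K, c ≠ 0 ∧
      contractLeft (Q := (0 : QuadraticForm K W)) (B.coord i) (wp B l) = c • wp B (l.erase i) := by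
  induction l with
  | nil => simp at hi
  | cons j l ih =>
    rcases List.mem_cons.1 hi with h | h
    · subst h
      have hil : i ∉ l := (List.nodup_cons.1 hnd).1
      refine ⟨1, one_ne_zero, ?_⟩
      rw [wp_cons, contractLeft_ι_mul, coord_basis, if_pos rfl, one_smul,
        contract_wp_not_mem B l i hil, mul_zero, sub_zero, List.erase_cons_head, one_smul]
    · have hij : i ≠ j := by
        rintro rfl; exact (List.nodup_cons.1 hnd).1 h
      obtain ⟨c, hc, heq⟩ := ih (List.nodup_cons.1 hnd).2 h
      refine ⟨-c, neg_ne_zero.2 hc, ?_⟩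
      rw [wp_cons, contractLeft_ι_mul, coord_basis, if_neg (Ne.symm hij), zero_smul, zero_sub,
        heq, List.erase_cons_tail (by simpa using Ne.symm hij), wp_cons, mul_smul_comm,
        neg_smul, ← neg_smul]

noncomputable def iterC (s : List (Fin n)) (u : CliffordAlgebra (0 : QuadraticForm K W)) :
    CliffordAlgebra (0 : QuadraticForm K W) :=
  s.foldl (fun v i => contractLeft (Q := (0 : QuadraticForm K W)) (B.coord i) v) u

@[simp] lemma iterC_nil (u) : iterC B [] u = u := rfl

lemma iterC_cons (i : Fin n) (s : List (Fin n)) (u) :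
    iterC B (i :: s) u = iterC B s (contractLeft (Q := (0 : QuadraticForm K W)) (B.coord i) u) :=
  rfl

lemma iterC_smul (s : List (Fin n)) (c : K) (u) : iterC B s (c • u) = c • iterC B s u := by
  induction s generalizing u with
  | nil => rfl
  | cons i s ih => rw [iterC_cons, map_smul, ih, iterC_cons]

@[simp] lemma iterC_zero (s : List (Fin n)) : iterC B s 0 = 0 := by
  induction s with
  | nil => rfl
  | cons i s ih => rw [iterC_cons, map_zero, ih]

lemma iterC_add (s : List (Fin n)) (u v) : iterC B s (u + v) = iterC B s u + iterC B s v := by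
  induction s generalizing u v with
  | nil => rfl
  | cons i s ih => rw [iterC_cons, map_add, ih, iterC_cons, iterC_cons]

lemma iterC_not_subset (s : List (Fin n)) : ∀ l : List (Fin n), l.Sorted (· < ·) →
    ¬ (∀ x ∈ s, x ∈ l) → iterC B s (wp B l) = 0 := by
  induction s with
  | nil => intro l _ h; exact absurd (by simp) h
  | cons i s ih =>
    intro l hl hns
    have hnd : l.Nodup := hl.nodup
    rw [iterC_cons]
    by_cases hi : i ∈ l
    · obtain ⟨c, _, heq⟩ := contract_wp_mem B l hnd i hi
      rw [heq, iterC_smul, ih (l.erase i) (hl.sublist List.erase_sublist) ?_, smul_zero]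
      intro hsub
      exact hns fun x hx => by
        rcases List.mem_cons.1 hx with h | h
        · exact h ▸ hi
        · exact List.erase_subset (hsub x h)
    · rw [contract_wp_not_mem B l i hi, iterC_zero]

lemma iterC_self (s : List (Fin n)) (hnd : s.Nodup) :
    ∃ c : K, c ≠ 0 ∧ iterC B s (wp B s) = c • 1 := by
  induction s with
  | nil => exact ⟨1, one_ne_zero, by simp⟩
  | cons i s ih =>
    obtain ⟨c, hc, heq⟩ := contract_wp_mem B (i :: s) hnd i (List.mem_cons_self)
    obtain ⟨c', hc', heq'⟩ := ih (List.nodup_cons.1 hnd).2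
    refine ⟨c * c', mul_ne_zero hc hc', ?_⟩
    rw [iterC_cons, heq, List.erase_cons_head, iterC_smul, heq', smul_smul]

lemma eq_of_sorted_mem_iff {l₁ l₂ : List (Fin n)} (h₁ : l₁.Sorted (· < ·))
    (h₂ : l₂.Sorted (· < ·)) (hmem : ∀ x, x ∈ l₁ ↔ x ∈ l₂) : l₁ = l₂ := by
  haveI : IsAntisymm (Fin n) (· < ·) := ⟨fun a b hab hba => absurd hab (asymm hba)⟩
  refine List.eq_of_perm_of_sorted ?_ h₁ h₂
  refine List.perm_of_nodup_nodup_toFinset_eq h₁.nodup h₂.nodup ?_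
  ext x
  simp [hmem x]

lemma det_exists {u : CliffordAlgebra (0 : QuadraticForm K W)} (hu : u ≠ 0) :
    ∃ (s : List (Fin n)) (c : K), c ≠ 0 ∧ iterC B s u = c • 1 := by
  classical
  -- u is a combination of sorted monomials indexed by finsets
  have hspan : u ∈ Submodule.span K
      (Set.range fun S : Finset (Fin n) => wp B (S.sort (· ≤ ·))) := by
    refine Submodule.span_le.2 ?_ (mem_span_sorted B u)
    rintro v ⟨l, hl, rfl⟩
    refine Submodule.subset_span ⟨l.toFinset, ?_⟩
    show wp B (l.toFinset.sort (· ≤ ·)) = wp B l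
    congr 1
    refine eq_of_sorted_mem_iff (Finset.sort_sorted_lt _) hl fun x => ?_
    rw [Finset.mem_sort, List.mem_toFinset]
  obtain ⟨a, ha⟩ := (Submodule.mem_span_range_iff_exists_fun K).1 hspan
  have hex : ∃ S : Finset (Fin n), a S ≠ 0 := by
    by_contra h
    push_neg at h
    apply hu
    rw [← ha]
    simp [h]
  set T : Finset (Finset (Fin n)) := Finset.univ.filter (fun S => a S ≠ 0) with hT
  have hTne : T.Nonempty := by
    obtain ⟨S, hS⟩ := hex
    exact ⟨S, by simp [hT, hS]⟩
  obtain ⟨S₀, hS₀T, hmax⟩ := T.exists_max_image Finset.card hTne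
  have hS₀ : a S₀ ≠ 0 := by simpa [hT] using hS₀T
  set s₀ := S₀.sort (· ≤ ·) with hs₀
  obtain ⟨c, hc, hcself⟩ := iterC_self B s₀ (S₀.sort_nodup _)
  refine ⟨s₀, a S₀ * c, mul_ne_zero hS₀ hc, ?_⟩
  have key : ∀ S : Finset (Fin n), S ≠ S₀ →
      iterC B s₀ (wp B (S.sort (· ≤ ·))) = 0 ∨ a S = 0 := by
    intro S hne
    by_cases haS : a S = 0
    · exact Or.inr haS
    refine Or.inl (iterC_not_subset B s₀ _ (Finset.sort_sorted_lt _) ?_)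
    intro hsub
    -- then S₀ ⊆ S, and card S ≤ card S₀, so S = S₀
    have hsub' : S₀ ⊆ S := fun x hx => by
      have := hsub x (by rwa [Finset.mem_sort])
      rwa [Finset.mem_sort] at this
    have hcard : S.card ≤ S₀.card := hmax S (by simp [hT, haS])
    exact hne (Finset.eq_of_subset_of_card_le hsub' hcard).symm
  calc iterC B s₀ u = iterC B s₀ (∑ S : Finset (Fin n), a S • wp B (S.sort (· ≤ ·))) := by
        rw [ha]
    _ = ∑ S : Finset (Fin n), a S • iterC B s₀ (wp B (S.sort (· ≤ ·))) := by
        rw [show (∑ S : Finset (Fin n), a S • wp B (S.sort (· ≤ ·))) =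
          ∑ S ∈ Finset.univ, a S • wp B (S.sort (· ≤ ·)) from rfl]
        induction (Finset.univ : Finset (Finset (Fin n))) using Finset.induction with
        | empty => simp
        | insert _ _ hnm ih =>
          rw [Finset.sum_insert hnm, Finset.sum_insert hnm, iterC_add, iterC_smul, ih]
    _ = a S₀ • iterC B s₀ (wp B s₀) := by
        rw [Finset.sum_eq_single S₀]
        · intro S _ hne
          rcases key S hne with h | h
          · rw [h, smul_zero]
          · rw [h, zero_smul]
        · intro h; exact absurd (Finset.mem_univ S₀) h
    _ = (a S₀ * c) • 1 := by rw [hcself, smul_smul]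

lemma prod_mem_span_len (xs : List W) :
    (xs.map fun x => ιE x).prod ∈ Submodule.span K
      {v : CliffordAlgebra (0 : QuadraticForm K W) |
        ∃ l : List (Fin n), l.Sorted (· < ·) ∧ l.length = xs.length ∧ v = wp B l} := by
  induction xs with
  | nil => exact Submodule.subset_span ⟨[], by simp, by simp, rfl⟩
  | cons x xs ih =>
    rw [List.map_cons, List.prod_cons]
    set S := {v : CliffordAlgebra (0 : QuadraticForm K W) |
        ∃ l : List (Fin n), l.Sorted (· < ·) ∧ l.length = (x :: xs).length ∧ v = wp B l} with hS
    refine Submodule.span_induction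
      (p := fun u _ => ιE x * u ∈ Submodule.span K S) ?_ ?_ ?_ ?_ ih
    · rintro v ⟨l, hl, hlen, rfl⟩
      have hx : x = ∑ i, B.repr x i • B i := (B.sum_repr x).symm
      rw [hx, map_sum, Finset.sum_mul]
      refine Submodule.sum_mem _ fun i _ => ?_
      rw [map_smul, smul_mul_assoc]
      refine Submodule.smul_mem _ _ ?_
      by_cases hmem : i ∈ l
      · rw [ins0 B l i hmem]; exact Submodule.zero_mem _
      · obtain ⟨c, l', hc, hsort', _, hlen', heq⟩ := ins B l hl i hmem
        rw [heq]
        exact Submodule.smul_mem _ _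
          (Submodule.subset_span ⟨l', hsort', by simp [hlen', hlen], rfl⟩)
    · simp
    · intro a b _ _ ha hb; rw [mul_add]; exact Submodule.add_mem _ ha hb
    · intro c a _ ha; rw [mul_smul_comm]; exact Submodule.smul_mem _ _ ha

include B in
lemma prod_ι_eq_zero (xs : List W) (hlen : n < xs.length) :
    (xs.map fun x => ιE x).prod = 0 := by
  have h := prod_mem_span_len B xs
  have hempty : {v : CliffordAlgebra (0 : QuadraticForm K W) |
        ∃ l : List (Fin n), l.Sorted (· < ·) ∧ l.length = xs.length ∧ v = wp B l} = ∅ := by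
    ext v
    simp only [Set.mem_setOf_eq, Set.mem_empty_iff_false, iff_false]
    rintro ⟨l, hl, hlen', rfl⟩
    have := List.Nodup.length_le_card hl.nodup
    simp only [Fintype.card_fin] at this
    omega
  rw [hempty, Submodule.span_empty, Submodule.mem_bot] at h
  exact h

end Det


section CliffDer
variable {K : Type*} [Field K] {V : Type*} [AddCommGroup V] [Module K V]
variable (Q : QuadraticForm K V)

lemma contract_mul (d : Module.Dual K V) (u v : CliffordAlgebra Q) :
    contractLeft (Q := Q) d (u * v) =
      contractLeft (Q := Q) d u * v + involute u * contractLeft (Q := Q) d v := by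
  induction u using CliffordAlgebra.induction generalizing v with
  | algebraMap r =>
    rw [contractLeft_algebraMap, zero_mul, zero_add, involute.commutes,
      ← Algebra.smul_def, ← Algebra.smul_def, map_smul]
  | ι x =>
    rw [contractLeft_ι_mul, contractLeft_ι, involute_ι, ← Algebra.smul_def, neg_mul, sub_eq_add_neg]
  | mul u w ihu ihw =>
    rw [mul_assoc, ihu (w * v), ihw v, ihu w]
    simp only [map_mul]
    noncomm_ring
  | add u w ihu ihw =>
    rw [add_mul, map_add, map_add, ihu v, ihw v, map_add, add_mul, add_mul]
    abel

lemma ι_mul_sub_involute_mul (x : V) (u : CliffordAlgebra Q) :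
    ι Q x * u - involute u * ι Q x =
      contractLeft (Q := Q) (QuadraticMap.polarBilin Q x) u := by
  induction u using CliffordAlgebra.induction with
  | algebraMap r =>
    rw [contractLeft_algebraMap, involute.commutes, ← Algebra.commutes r (ι Q x), sub_self]
  | ι y =>
    rw [involute_ι, contractLeft_ι, neg_mul, sub_neg_eq_add, ι_mul_ι_add_swap]
    rfl
  | mul u v ihu ihv =>
    rw [contract_mul, ← ihu, ← ihv, map_mul]
    noncomm_ring
  | add u v ihu ihv =>
    rw [map_add, map_add, mul_add, add_mul, ← ihu, ← ihv]
    abel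

/-- If `r` pairs to zero with everything, `ι r` (anti)commutes: `ι r * u = involute u * ι r`. -/
lemma ι_radical_comm {r : V} (hr : QuadraticMap.polarBilin Q r = 0) (u : CliffordAlgebra Q) :
    ι Q r * u = involute u * ι Q r := by
  have h := ι_mul_sub_involute_mul Q r u
  rw [hr, map_zero, LinearMap.zero_apply, sub_eq_zero] at h
  exact h

end CliffDer


section Part1
variable {k V : Type*} [Field k] [AddCommGroup V] [Module k V] [FiniteDimensional k V]
variable (Q : QuadraticForm k V)

/-- The submodule of sums of elements `ι r * c` with `r` in the radical. -/
noncomputable def Mrad : Submodule k (CliffordAlgebra Q) :=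
  Submodule.span k {u | ∃ r ∈ LinearMap.ker (QuadraticMap.polarBilin Q),
    ∃ c, u = CliffordAlgebra.ι Q r * c}

lemma Q_rad_zero (h2 : (2 : k) ≠ 0) {r : V}
    (hr : r ∈ LinearMap.ker (QuadraticMap.polarBilin Q)) : Q r = 0 := by
  have h := QuadraticMap.polar_self Q r
  have hr0 : QuadraticMap.polar Q r r = 0 := by
    have := LinearMap.mem_ker.1 hr
    calc QuadraticMap.polar Q r r = QuadraticMap.polarBilin Q r r := rfl
      _ = 0 := by rw [this]; rfl
  rw [hr0] at h
  have : (2 : k) * Q r = 0 := by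
    have h2' : (2 : ℕ) • Q r = (2 : k) * Q r := by
      rw [nsmul_eq_mul]; norm_num
    rw [← h2', ← h]
  rcases mul_eq_zero.1 this with h | h
  · exact absurd h h2
  · exact h

/-- The isometry from the zero form on the radical into `Q`. -/
noncomputable def radIso (h2 : (2 : k) ≠ 0) :
    (0 : QuadraticForm k (LinearMap.ker (QuadraticMap.polarBilin Q))) →qᵢ Q where
  toLinearMap := (LinearMap.ker (QuadraticMap.polarBilin Q)).subtype
  map_app' := fun m => by
    simpa using Q_rad_zero Q h2 m.2

lemma prod_rad_eq_zero (h2 : (2 : k) ≠ 0)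
    (rs : List (LinearMap.ker (QuadraticMap.polarBilin Q)))
    (hlen : Module.finrank k (LinearMap.ker (QuadraticMap.polarBilin Q)) < rs.length) :
    ((rs.map fun r => CliffordAlgebra.ι Q r.val).prod) = 0 := by
  have key : ∀ rs' : List (LinearMap.ker (QuadraticMap.polarBilin Q)),
      (rs'.map fun r => CliffordAlgebra.ι Q r.val).prod =
      CliffordAlgebra.map (radIso Q h2)
        ((rs'.map fun r => CliffordAlgebra.ι
          (0 : QuadraticForm k (LinearMap.ker (QuadraticMap.polarBilin Q))) r).prod) := by
    intro rs'
    induction rs' with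
    | nil =>
      rw [List.map_nil, List.map_nil, List.prod_nil, List.prod_nil, map_one]
    | cons r rs ih =>
      rw [List.map_cons, List.prod_cons, List.map_cons, List.prod_cons, map_mul, ih,
        CliffordAlgebra.map_apply_ι]
      rfl
  rw [key rs, prod_ι_eq_zero (Module.finBasis k (LinearMap.ker (QuadraticMap.polarBilin Q))) rs
    (by simpa using hlen), map_zero]

lemma move_past (rs : List (LinearMap.ker (QuadraticMap.polarBilin Q)))
    (c : CliffordAlgebra Q) :
    ∃ c', c * (rs.map fun r => CliffordAlgebra.ι Q r.val).prod =
      (rs.map fun r => CliffordAlgebra.ι Q r.val).prod * c' := by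
  induction rs generalizing c with
  | nil => exact ⟨c, by simp⟩
  | cons r rs ih =>
    obtain ⟨c', hc'⟩ := ih (involute c)
    refine ⟨c', ?_⟩
    have hcomm : c * CliffordAlgebra.ι Q r.val = CliffordAlgebra.ι Q r.val * involute c := by
      have h := ι_radical_comm Q (LinearMap.mem_ker.1 r.2) (involute c)
      rwa [involute_involute, eq_comm] at h
    rw [List.map_cons, List.prod_cons, ← mul_assoc, hcomm, mul_assoc, hc', ← mul_assoc]

lemma core_prod_mem (as : List (CliffordAlgebra Q)) (has : ∀ a ∈ as, a ∈ Mrad Q) :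
    as.prod ∈ Submodule.span k
      {u | ∃ (rs : List (LinearMap.ker (QuadraticMap.polarBilin Q)))
        (c : CliffordAlgebra Q), rs.length = as.length ∧
          u = (rs.map fun r => CliffordAlgebra.ι Q r.val).prod * c} := by
  induction as with
  | nil => exact Submodule.subset_span ⟨[], 1, rfl, by simp⟩
  | cons a as ih =>
    rw [List.prod_cons]
    have ha : a ∈ Mrad Q := has a (List.mem_cons_self)
    have hrest := ih fun b hb => has b (List.mem_cons_of_mem a hb)
    set P := {u : CliffordAlgebra Q |
      ∃ (rs : List (LinearMap.ker (QuadraticMap.polarBilin Q)))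
        (c : CliffordAlgebra Q), rs.length = (a :: as).length ∧
          u = (rs.map fun r => CliffordAlgebra.ι Q r.val).prod * c} with hP
    refine Submodule.span_induction
      (p := fun x _ => x * as.prod ∈ Submodule.span k P) ?_ ?_ ?_ ?_ ha
    · rintro x ⟨r, hr, c, rfl⟩
      refine Submodule.span_induction
        (p := fun y _ => (CliffordAlgebra.ι Q r * c) * y ∈ Submodule.span k P) ?_ ?_ ?_ ?_ hrest
      · rintro y ⟨rs, c', hlen, rfl⟩
        obtain ⟨c'', hc''⟩ := move_past Q rs c
        refine Submodule.subset_span ⟨⟨r, hr⟩ :: rs, c'' * c', by simp [hlen], ?_⟩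
        rw [List.map_cons, List.prod_cons, mul_assoc, ← mul_assoc c, hc'']
        simp only [mul_assoc]
      · simp
      · intro u v _ _ hu hv; rw [mul_add]; exact Submodule.add_mem _ hu hv
      · intro t u _ hu; rw [mul_smul_comm]; exact Submodule.smul_mem _ _ hu
    · simp
    · intro u v _ _ hu hv; rw [add_mul]; exact Submodule.add_mem _ hu hv
    · intro t u _ hu; rw [smul_mul_assoc]; exact Submodule.smul_mem _ _ hu

lemma Mrad_pow_eq_zero (h2 : (2 : k) ≠ 0) {a : CliffordAlgebra Q} (ha : a ∈ Mrad Q) :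
    a ^ (Module.finrank k (LinearMap.ker (QuadraticMap.polarBilin Q)) + 1) = 0 := by
  set m := Module.finrank k (LinearMap.ker (QuadraticMap.polarBilin Q)) + 1 with hm
  have hrep : a ^ m = (List.replicate m a).prod := (List.prod_replicate m a).symm
  have hmem := core_prod_mem Q (List.replicate m a) fun b hb => by
    rw [List.eq_of_mem_replicate hb]; exact ha
  rw [List.length_replicate] at hmem
  have hzero : {u : CliffordAlgebra Q |
      ∃ (rs : List (LinearMap.ker (QuadraticMap.polarBilin Q)))
        (c : CliffordAlgebra Q), rs.length = m ∧
          u = (rs.map fun r => CliffordAlgebra.ι Q r.val).prod * c} ⊆ {0} := by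
    rintro u ⟨rs, c, hlen, rfl⟩
    rw [prod_rad_eq_zero Q h2 rs (by omega), zero_mul]
    rfl
  have : Submodule.span k {u : CliffordAlgebra Q |
      ∃ (rs : List (LinearMap.ker (QuadraticMap.polarBilin Q)))
        (c : CliffordAlgebra Q), rs.length = m ∧
          u = (rs.map fun r => CliffordAlgebra.ι Q r.val).prod * c} ≤ ⊥ := by
    rw [← Submodule.span_zero_singleton k]
    exact Submodule.span_mono hzero
  rw [hrep]
  exact Submodule.mem_bot _ |>.1 (this hmem)

lemma Mrad_mul_left (y : CliffordAlgebra Q) {a : CliffordAlgebra Q} (ha : a ∈ Mrad Q) :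
    y * a ∈ Mrad Q := by
  refine Submodule.span_induction (p := fun x _ => y * x ∈ Mrad Q) ?_ ?_ ?_ ?_ ha
  · rintro x ⟨r, hr, c, rfl⟩
    have hcomm : y * CliffordAlgebra.ι Q r = CliffordAlgebra.ι Q r * involute y := by
      have h := ι_radical_comm Q (LinearMap.mem_ker.1 hr) (involute y)
      rwa [involute_involute, eq_comm] at h
    rw [← mul_assoc, hcomm, mul_assoc]
    exact Submodule.subset_span ⟨r, hr, involute y * c, rfl⟩
  · simp [Mrad]
  · intro u v _ _ hu hv; rw [mul_add]; exact Submodule.add_mem _ hu hv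
  · intro t u _ hu; rw [mul_smul_comm]; exact Submodule.smul_mem _ _ hu

lemma Mrad_mul_right {a : CliffordAlgebra Q} (ha : a ∈ Mrad Q) (y : CliffordAlgebra Q) :
    a * y ∈ Mrad Q := by
  refine Submodule.span_induction (p := fun x _ => x * y ∈ Mrad Q) ?_ ?_ ?_ ?_ ha
  · rintro x ⟨r, hr, c, rfl⟩
    rw [mul_assoc]
    exact Submodule.subset_span ⟨r, hr, c * y, rfl⟩
  · simp [Mrad]
  · intro u v _ _ hu hv; rw [add_mul]; exact Submodule.add_mem _ hu hv
  · intro t u _ hu; rw [smul_mul_assoc]; exact Submodule.smul_mem _ _ hu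

lemma Mrad_le_jacobson (h2 : (2 : k) ≠ 0) {a : CliffordAlgebra Q} (ha : a ∈ Mrad Q) :
    a ∈ Ideal.jacobson (⊥ : Ideal (CliffordAlgebra Q)) := by
  rw [Ideal.mem_jacobson_iff]
  intro y
  have hya : y * a ∈ Mrad Q := Mrad_mul_left Q y ha
  have hnil : IsNilpotent (y * a) := ⟨_, Mrad_pow_eq_zero Q h2 hya⟩
  obtain ⟨u, hu⟩ := hnil.isUnit_one_add
  refine ⟨↑u⁻¹, ?_⟩
  rw [Ideal.mem_bot]
  have : (↑u⁻¹ : CliffordAlgebra Q) * (1 + y * a) = 1 := by rw [← hu]; exact u.inv_mul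
  calc ↑u⁻¹ * y * a + ↑u⁻¹ - 1 = ↑u⁻¹ * (1 + y * a) - 1 := by noncomm_ring
    _ = 0 := by rw [this, sub_self]

lemma span_eq_Mrad (x : CliffordAlgebra Q) :
    x ∈ TwoSidedIdeal.span
      (⇑(CliffordAlgebra.ι Q) '' (LinearMap.ker (QuadraticMap.polarBilin Q) : Set V)) ↔
    x ∈ Mrad Q := by
  constructor
  · intro hx
    have hsub : (⇑(CliffordAlgebra.ι Q) ''
        (LinearMap.ker (QuadraticMap.polarBilin Q) : Set V)) ⊆
        ((TwoSidedIdeal.mk' (Mrad Q : Set (CliffordAlgebra Q))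
          (Submodule.zero_mem _) (fun ha hb => Submodule.add_mem _ ha hb)
          (fun ha => Submodule.neg_mem _ ha)
          (fun {y a} ha => Mrad_mul_left Q y ha)
          (fun {a y} ha => Mrad_mul_right Q ha y)) : Set (CliffordAlgebra Q)) := by
      rintro u ⟨r, hr, rfl⟩
      rw [SetLike.mem_coe, TwoSidedIdeal.mem_mk']
      exact Submodule.subset_span ⟨r, hr, 1, (mul_one _).symm⟩
    have := TwoSidedIdeal.mem_span_iff.1 hx _ hsub
    rwa [TwoSidedIdeal.mem_mk'] at this
  · intro hx
    refine Submodule.span_induction (p := fun u _ => u ∈ TwoSidedIdeal.span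
      (⇑(CliffordAlgebra.ι Q) '' (LinearMap.ker (QuadraticMap.polarBilin Q) : Set V)))
      ?_ ?_ ?_ ?_ hx
    · rintro u ⟨r, hr, c, rfl⟩
      exact TwoSidedIdeal.mul_mem_right _ _ _
        (TwoSidedIdeal.subset_span ⟨r, hr, rfl⟩)
    · exact TwoSidedIdeal.zero_mem _
    · intro u v _ _ hu hv; exact TwoSidedIdeal.add_mem _ hu hv
    · intro t u _ hu
      rw [Algebra.smul_def]
      exact TwoSidedIdeal.mul_mem_left _ _ _ hu

end Part1


lemma jac_map_surj {R S : Type*} [Ring R] [Ring S] (f : R →+* S) (hf : Function.Surjective f)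
    {x : R} (hx : x ∈ Ideal.jacobson (⊥ : Ideal R)) : f x ∈ Ideal.jacobson (⊥ : Ideal S) := by
  rw [Ideal.mem_jacobson_iff]
  intro y'
  obtain ⟨y, rfl⟩ := hf y'
  obtain ⟨z, hz⟩ := Ideal.mem_jacobson_iff.1 hx y
  rw [Ideal.mem_bot] at hz
  refine ⟨f z, ?_⟩
  rw [Ideal.mem_bot]
  have := congrArg f hz
  simpa using this

section NonDeg
variable {k W : Type*} [Field k] [AddCommGroup W] [Module k W] [FiniteDimensional k W]

noncomputable def involuteRingEquiv (Q : QuadraticForm k W) :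
    CliffordAlgebra Q ≃+* CliffordAlgebra Q where
  toFun := involute
  invFun := involute
  left_inv := involute_involute
  right_inv := involute_involute
  map_mul' := map_mul _
  map_add' := map_add _

lemma equivExterior_contract (Q : QuadraticForm k W) [Invertible (2 : k)]
    (d : Module.Dual k W) (v : CliffordAlgebra Q) :
    equivExterior Q (contractLeft (Q := Q) d v) =
      contractLeft (Q := (0 : QuadraticForm k W)) d (equivExterior Q v) :=
  changeForm_contractLeft CliffordAlgebra.changeForm.associated_neg_proof d v

lemma jacobson_bot_of_polar_surj (h2 : (2 : k) ≠ 0) (Q : QuadraticForm k W)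
    (hsurj : ∀ φ : Module.Dual k W, ∃ x : W, (QuadraticMap.polarBilin Q) x = φ) :
    Ideal.jacobson (⊥ : Ideal (CliffordAlgebra Q)) = ⊥ := by
  haveI : Invertible (2 : k) := invertibleOfNonzero h2
  refine le_antisymm ?_ bot_le
  intro u hu
  rw [Ideal.mem_bot]
  by_contra hu0
  set B := Module.finBasis k W with hB
  set e := equivExterior Q with he
  have hue : e u ≠ 0 := fun h => hu0 (by
    have := congrArg e.symm h
    rwa [LinearEquiv.symm_apply_apply, map_zero] at this)
  obtain ⟨s, c, hc, hdet⟩ := det_exists B hue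
  -- iterated contraction on the Clifford side
  set iterQ : List (Fin (Module.finrank k W)) → CliffordAlgebra Q → CliffordAlgebra Q :=
    fun s v => s.foldl (fun w i => contractLeft (Q := Q) (B.coord i) w) v with hiter
  have hcomm : ∀ (s : List (Fin (Module.finrank k W))) (v : CliffordAlgebra Q),
      e (iterQ s v) = iterC B s (e v) := by
    intro s
    induction s with
    | nil => intro v; rfl
    | cons i s ih =>
      intro v
      rw [show iterQ (i :: s) v = iterQ s (contractLeft (Q := Q) (B.coord i) v) from rfl,
        iterC_cons, ih, equivExterior_contract]
  have hmem : ∀ (s : List (Fin (Module.finrank k W))) (v : CliffordAlgebra Q),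
      v ∈ Ideal.jacobson (⊥ : Ideal (CliffordAlgebra Q)) →
      iterQ s v ∈ Ideal.jacobson (⊥ : Ideal (CliffordAlgebra Q)) := by
    intro s
    induction s with
    | nil => intro v hv; exact hv
    | cons i s ih =>
      intro v hv
      rw [show iterQ (i :: s) v = iterQ s (contractLeft (Q := Q) (B.coord i) v) from rfl]
      refine ih _ ?_
      obtain ⟨x, hx⟩ := hsurj (B.coord i)
      rw [← hx, ← ι_mul_sub_involute_mul]
      exact Ideal.sub_mem _ (Ideal.mul_mem_left _ _ hv)
        (jac_mul_right (jac_equiv_mem (involuteRingEquiv Q) hv) _)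
  have hv₀ : iterQ s u ∈ Ideal.jacobson (⊥ : Ideal (CliffordAlgebra Q)) := hmem s u hu
  have hv₀eq : iterQ s u = c • 1 := by
    have h1 : e (iterQ s u) = c • 1 := by rw [hcomm, ← hdet]
    have h2' : e (c • (1 : CliffordAlgebra Q)) = c • (1 : CliffordAlgebra (0 : QuadraticForm k W)) := by
      rw [map_smul]
      congr 1
      exact changeForm_one CliffordAlgebra.changeForm.associated_neg_proof
    exact e.injective (h1.trans h2'.symm)
  have hone : (1 : CliffordAlgebra Q) ∈ Ideal.jacobson (⊥ : Ideal (CliffordAlgebra Q)) := by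
    have : c⁻¹ • (iterQ s u) ∈ Ideal.jacobson (⊥ : Ideal (CliffordAlgebra Q)) := by
      rw [Algebra.smul_def]
      exact Ideal.mul_mem_left _ _ hv₀
    rwa [hv₀eq, smul_smul, inv_mul_cancel₀ hc, one_smul] at this
  have htop : Ideal.jacobson (⊥ : Ideal (CliffordAlgebra Q)) = ⊤ :=
    (Ideal.eq_top_iff_one _).2 hone
  have hbot : (⊥ : Ideal (CliffordAlgebra Q)) = ⊤ := Ideal.jacobson_eq_top_iff.1 htop
  have : (1 : CliffordAlgebra Q) = 0 := by
    have h1 : (1 : CliffordAlgebra Q) ∈ (⊥ : Ideal (CliffordAlgebra Q)) := by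
      rw [hbot]; trivial
    exact Ideal.mem_bot.1 h1
  exact one_ne_zero this

end NonDeg


/-- Let `k` be a field of characteristic ≠ 2, `V` a finite-dimensional
`k`-vector space, and `Q` a quadratic form on `V` with polar bilinear form `b`.  Then the
Jacobson radical of the Clifford algebra `C(Q)` (the intersection of its maximal left
ideals) equals the two-sided ideal of `C(Q)` generated by `ι(rad b)`. -/
theorem stmt0 {k V : Type*} [Field k] [AddCommGroup V] [Module k V]
    [FiniteDimensional k V] (h2 : (2 : k) ≠ 0) (Q : QuadraticForm k V) :
    (((⊥ : Ideal (CliffordAlgebra Q)).jacobson : Ideal (CliffordAlgebra Q)) :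
        Set (CliffordAlgebra Q)) =
      ((TwoSidedIdeal.span
          (⇑(CliffordAlgebra.ι Q) '' (LinearMap.ker Q.polarBilin : Set V))) :
        Set (CliffordAlgebra Q)) := by
  classical
  obtain ⟨W, hW⟩ := Submodule.exists_isCompl (LinearMap.ker (QuadraticMap.polarBilin Q))
  set π : V →ₗ[k] W :=
    W.linearProjOfIsCompl (LinearMap.ker (QuadraticMap.polarBilin Q)) hW.symm with hπ
  set Q' : QuadraticForm k W := Q.comp W.subtype with hQ'
  have hdecomp : ∀ x : V, x - (π x : V) ∈ LinearMap.ker (QuadraticMap.polarBilin Q) := by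
    intro x
    have h := Submodule.projection_add_projection_eq_self hW.symm x
    have hx : x - (π x : V) =
        ((LinearMap.ker (QuadraticMap.polarBilin Q)).linearProjOfIsCompl W hW.symm.symm x : V) :=
      sub_eq_of_eq_add' h.symm
    rw [hx]
    exact Submodule.coe_mem _
  -- Q x = Q' (π x)
  have hQπ : ∀ x : V, Q' (π x) = Q x := by
    intro x
    have hr := hdecomp x
    have hQr : Q (x - (π x : V)) = 0 := Q_rad_zero Q h2 hr
    have hpolar : QuadraticMap.polar Q ((π x : V)) (x - (π x : V)) = 0 := by
      rw [QuadraticMap.polar_comm]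
      have h0 : QuadraticMap.polarBilin Q (x - (π x : V)) = 0 := LinearMap.mem_ker.1 hr
      calc QuadraticMap.polar Q (x - (π x : V)) (π x : V)
          = QuadraticMap.polarBilin Q (x - (π x : V)) (π x : V) := rfl
        _ = 0 := by rw [h0]; rfl
    have hsum : Q ((π x : V) + (x - (π x : V))) =
        Q (π x : V) + Q (x - (π x : V)) + QuadraticMap.polar Q (π x : V) (x - (π x : V)) := by
      have hdef : QuadraticMap.polar Q (π x : V) (x - (π x : V)) =
          Q ((π x : V) + (x - (π x : V))) - Q (π x : V) - Q (x - (π x : V)) := rfl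
      rw [hdef]; ring
    rw [add_sub_cancel] at hsum
    have : Q' (π x) = Q (π x : V) := rfl
    rw [this, hsum, hQr, hpolar, add_zero, add_zero]
  -- the algebra map f : C(Q) → C(Q')
  set f : CliffordAlgebra Q →ₐ[k] CliffordAlgebra Q' :=
    CliffordAlgebra.lift Q ⟨(CliffordAlgebra.ι Q').comp π, fun x => by
      rw [LinearMap.comp_apply, CliffordAlgebra.ι_sq_scalar, hQπ]⟩ with hf
  have hfι : ∀ x : V, f (CliffordAlgebra.ι Q x) = CliffordAlgebra.ι Q' (π x) := fun x => by
    rw [hf, CliffordAlgebra.lift_ι_apply, LinearMap.comp_apply]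
  -- the algebra map g : C(Q') → C(Q)
  set gW : Q' →qᵢ Q := ⟨W.subtype, fun m => rfl⟩ with hgW
  set g : CliffordAlgebra Q' →ₐ[k] CliffordAlgebra Q := CliffordAlgebra.map gW with hg
  have hgι : ∀ w : W, g (CliffordAlgebra.ι Q' w) = CliffordAlgebra.ι Q (w : V) := fun w => by
    rw [hg, CliffordAlgebra.map_apply_ι]; rfl
  -- u - g (f u) lies in the radical ideal
  have hgf : ∀ u : CliffordAlgebra Q, u - g (f u) ∈ Mrad Q := by
    intro u
    induction u using CliffordAlgebra.induction with
    | algebraMap r =>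
      rw [AlgHom.commutes, AlgHom.commutes, sub_self]
      exact Submodule.zero_mem _
    | ι x =>
      rw [hfι, hgι, ← map_sub]
      exact Submodule.subset_span ⟨x - (π x : V), hdecomp x, 1, (mul_one _).symm⟩
    | mul u v ihu ihv =>
      rw [map_mul, map_mul]
      have key : u * v - g (f u) * g (f v) =
          (u - g (f u)) * v + g (f u) * (v - g (f v)) := by noncomm_ring
      rw [key]
      exact Submodule.add_mem _ (Mrad_mul_right Q ihu v) (Mrad_mul_left Q (g (f u)) ihv)
    | add u v ihu ihv =>
      rw [map_add, map_add]
      have key : u + v - (g (f u) + g (f v)) = (u - g (f u)) + (v - g (f v)) := by abel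
      rw [key]
      exact Submodule.add_mem _ ihu ihv
  -- f is surjective
  have hπw : ∀ w : W, π (w : V) = w := fun w =>
    Submodule.linearProjOfIsCompl_apply_left hW.symm w
  have hfsurj : Function.Surjective f := by
    intro v
    induction v using CliffordAlgebra.induction with
    | algebraMap r => exact ⟨algebraMap k _ r, AlgHom.commutes _ r⟩
    | ι w => exact ⟨CliffordAlgebra.ι Q (w : V), by rw [hfι, hπw]⟩
    | mul a b iha ihb =>
      obtain ⟨a', ha⟩ := iha; obtain ⟨b', hb⟩ := ihb
      exact ⟨a' * b', by rw [map_mul, ha, hb]⟩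
    | add a b iha ihb =>
      obtain ⟨a', ha⟩ := iha; obtain ⟨b', hb⟩ := ihb
      exact ⟨a' + b', by rw [map_add, ha, hb]⟩
  -- Q' has surjective polarization
  have hcompl : QuadraticMap.polarBilin Q' =
      LinearMap.compl₁₂ (QuadraticMap.polarBilin Q) W.subtype W.subtype :=
    QuadraticMap.polarBilin_comp Q W.subtype
  have hQ'surj : ∀ φ : Module.Dual k W, ∃ x : W, QuadraticMap.polarBilin Q' x = φ := by
    have hker : ∀ w : W, QuadraticMap.polarBilin Q' w = 0 → w = 0 := by
      intro w hw
      have hwrad : (w : V) ∈ LinearMap.ker (QuadraticMap.polarBilin Q) := by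
        rw [LinearMap.mem_ker]
        apply LinearMap.ext
        intro v
        have hv : v = (π v : V) + (v - (π v : V)) := by abel
        rw [LinearMap.zero_apply, hv, map_add]
        have h1 : QuadraticMap.polarBilin Q (w : V) (π v : V) = 0 := by
          have := congrArg (fun ψ : Module.Dual k W => ψ (π v)) hw
          simp only [LinearMap.zero_apply] at this
          rw [hcompl] at this
          simpa [LinearMap.compl₁₂_apply] using this
        have h2' : QuadraticMap.polarBilin Q (w : V) (v - (π v : V)) = 0 := by
          have h0 : QuadraticMap.polarBilin Q (v - (π v : V)) = 0 :=
            LinearMap.mem_ker.1 (hdecomp v)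
          calc QuadraticMap.polarBilin Q (w : V) (v - (π v : V))
              = QuadraticMap.polar Q (w : V) (v - (π v : V)) := rfl
            _ = QuadraticMap.polar Q (v - (π v : V)) (w : V) := QuadraticMap.polar_comm _ _ _
            _ = QuadraticMap.polarBilin Q (v - (π v : V)) (w : V) := rfl
            _ = 0 := by rw [h0]; rfl
        rw [h1, h2', add_zero]
      have : (w : V) = 0 :=
        Submodule.disjoint_def.1 hW.disjoint (w : V) hwrad w.2
      exact Subtype.ext this
    have hinj : Function.Injective (QuadraticMap.polarBilin Q') := by
      rw [← LinearMap.ker_eq_bot, LinearMap.ker_eq_bot']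
      intro w hw
      exact hker w hw
    have hsurj := (LinearMap.injective_iff_surjective_of_finrank_eq_finrank
      (by rw [Subspace.dual_finrank_eq])).1 hinj
    exact fun φ => hsurj φ
  have hjacQ' : Ideal.jacobson (⊥ : Ideal (CliffordAlgebra Q')) = ⊥ :=
    jacobson_bot_of_polar_surj h2 Q' hQ'surj
  ext x
  simp only [SetLike.mem_coe]
  rw [span_eq_Mrad]
  constructor
  · intro hx
    have hfx : f x ∈ Ideal.jacobson (⊥ : Ideal (CliffordAlgebra Q')) :=
      jac_map_surj (f : CliffordAlgebra Q →+* CliffordAlgebra Q') hfsurj hx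
    rw [hjacQ', Ideal.mem_bot] at hfx
    have hzero : g (f x) = 0 := by rw [hfx, map_zero]
    have h := hgf x
    rwa [hzero, sub_zero] at h
  · intro hx
    exact Mrad_le_jacobson Q h2 hx
end

section
/- Let k be a field of characteristic ≠ 2, V a finite-dimensional k-vector space, Q a quadratic form on V with polar bilinear form b, and let W be any linear complement of rad(b) in V. Then the quotient of the Clifford algebra C(Q) by the two-sided ideal generated by ι(rad(b)) is isomorphic, as a k-algebra, to the Clifford algebra C(Q|_W) of the restriction of Q to W. -/
/-- Let `k` be a field of characteristic ≠ 2, `V` a finite-dimensional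
`k`-vector space, `Q` a quadratic form with polar form `b`, and `W` a linear complement of
`rad b` in `V`.  Then the quotient of `C(Q)` by the two-sided ideal generated by
`ι(rad b)` is isomorphic as a `k`-algebra to `C(Q|_W)`; equivalently, there is a
surjective `k`-algebra homomorphism `C(Q) → C(Q|_W)` whose kernel is that two-sided
ideal. -/
theorem stmt1 {k V : Type*} [Field k] [AddCommGroup V] [Module k V]
    [FiniteDimensional k V] (h2 : (2 : k) ≠ 0) (Q : QuadraticForm k V)
    (W : Submodule k V) (hW : IsCompl (LinearMap.ker Q.polarBilin) W) :
    ∃ φ : CliffordAlgebra Q →ₐ[k] CliffordAlgebra (Q.comp W.subtype),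
      Function.Surjective φ ∧
      ((RingHom.ker φ : Ideal (CliffordAlgebra Q)) : Set (CliffordAlgebra Q)) =
        ((TwoSidedIdeal.span
            (⇑(CliffordAlgebra.ι Q) '' (LinearMap.ker Q.polarBilin : Set V))) :
          Set (CliffordAlgebra Q)) := by
  classical
  set R := LinearMap.ker Q.polarBilin with hR
  -- projection onto W along the radical
  set p : V →ₗ[k] W := W.linearProjOfIsCompl R hW.symm with hp
  -- every element of the radical has Q-value 0
  have hQrad : ∀ r ∈ R, Q r = 0 := by
    intro r hr
    have h : Q.polarBilin r r = 0 := by rw [LinearMap.mem_ker.mp hr]; rfl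
    rw [QuadraticMap.polarBilin_apply_apply, QuadraticMap.polar_self] at h
    have hsum : Q r + Q r = 0 := by rw [← two_smul ℕ (Q r)]; exact h
    have h' : (2 : k) * Q r = 0 := by rw [two_mul]; exact hsum
    rcases mul_eq_zero.mp h' with h'' | h''
    · exact absurd h'' h2
    · exact h''
  -- Q of the projection equals Q
  have hQp : ∀ v : V, Q (p v : V) = Q v := by
    intro v
    have hdecomp : (R.linearProjOfIsCompl W hW v : V) + (p v : V) = v :=
      Submodule.projection_add_projection_eq_self hW v
    obtain ⟨r, hrR⟩ : ∃ r, r ∈ R ∧ r + (p v : V) = v :=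
      ⟨(R.linearProjOfIsCompl W hW v : V), (R.linearProjOfIsCompl W hW v).2, hdecomp⟩
    obtain ⟨hrR, hsum⟩ := hrR
    have hb : Q.polarBilin r (p v : V) = 0 := by
      rw [LinearMap.mem_ker.mp hrR]; rfl
    rw [QuadraticMap.polarBilin_apply_apply] at hb
    have hadd := QuadraticMap.map_add (⇑Q) r (p v : V)
    rw [hsum] at hadd
    rw [hadd, hQrad r hrR, hb, add_zero, zero_add]
  -- the algebra map φ
  let f : V →ₗ[k] CliffordAlgebra (Q.comp W.subtype) :=
    (CliffordAlgebra.ι (Q.comp W.subtype)).comp p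
  have hf : ∀ v, f v * f v = algebraMap k (CliffordAlgebra (Q.comp W.subtype)) (Q v) := by
    intro v
    show CliffordAlgebra.ι _ (p v) * CliffordAlgebra.ι _ (p v) = _
    rw [CliffordAlgebra.ι_sq_scalar]
    congr 1
    exact hQp v
  let φ : CliffordAlgebra Q →ₐ[k] CliffordAlgebra (Q.comp W.subtype) :=
    CliffordAlgebra.lift Q ⟨f, hf⟩
  have hφι : ∀ v : V, φ (CliffordAlgebra.ι Q v) = CliffordAlgebra.ι (Q.comp W.subtype) (p v) :=
    fun v => CliffordAlgebra.lift_ι_apply f hf v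
  -- the section ψ
  let incl : Q.comp W.subtype →qᵢ Q := ⟨W.subtype, fun _ => rfl⟩
  let ψ : CliffordAlgebra (Q.comp W.subtype) →ₐ[k] CliffordAlgebra Q :=
    CliffordAlgebra.map incl
  have hψι : ∀ w : W, ψ (CliffordAlgebra.ι (Q.comp W.subtype) w) = CliffordAlgebra.ι Q (w : V) :=
    fun w => CliffordAlgebra.map_apply_ι incl w
  -- surjectivity
  have hsurj : Function.Surjective φ := by
    intro y
    have : y ∈ φ.range := by
      induction y using CliffordAlgebra.induction with
      | algebraMap r => exact ⟨algebraMap k _ r, φ.commutes r⟩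
      | ι w =>
        refine ⟨CliffordAlgebra.ι Q (w : V), ?_⟩
        show φ (CliffordAlgebra.ι Q (w : V)) = CliffordAlgebra.ι (Q.comp W.subtype) w
        rw [hφι]
        congr 1
        exact Submodule.linearProjOfIsCompl_apply_left hW.symm w
      | mul a b ha hb => exact mul_mem ha hb
      | add a b ha hb => exact add_mem ha hb
    exact this
  set S : Set (CliffordAlgebra Q) := ⇑(CliffordAlgebra.ι Q) '' (R : Set V) with hS
  set I : TwoSidedIdeal (CliffordAlgebra Q) := TwoSidedIdeal.span S with hI
  -- key: x - ψ (φ x) ∈ I for all x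
  have hkey : ∀ x : CliffordAlgebra Q, x - ψ (φ x) ∈ I := by
    intro x
    induction x using CliffordAlgebra.induction with
    | algebraMap r =>
      rw [φ.commutes, ψ.commutes, sub_self]
      exact zero_mem I
    | ι v =>
      rw [hφι, hψι]
      have : CliffordAlgebra.ι Q v - CliffordAlgebra.ι Q (p v : V)
          = CliffordAlgebra.ι Q (v - (p v : V)) := by rw [map_sub]
      rw [this]
      apply TwoSidedIdeal.subset_span
      refine ⟨v - (p v : V), ?_, rfl⟩
      have hdecomp : (R.linearProjOfIsCompl W hW v : V) + (p v : V) = v :=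
        Submodule.projection_add_projection_eq_self hW v
      have heq : (R.linearProjOfIsCompl W hW v : V) = v - (p v : V) :=
        eq_sub_of_add_eq hdecomp
      rw [SetLike.mem_coe, ← heq]
      exact (R.linearProjOfIsCompl W hW v).2
    | mul a b ha hb =>
      have : a * b - ψ (φ (a * b)) = a * (b - ψ (φ b)) + (a - ψ (φ a)) * ψ (φ b) := by
        rw [map_mul, map_mul]; noncomm_ring
      rw [this]
      exact TwoSidedIdeal.add_mem I
        (TwoSidedIdeal.mul_mem_left I _ _ hb)
        (TwoSidedIdeal.mul_mem_right I _ _ ha)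
    | add a b ha hb =>
      have : a + b - ψ (φ (a + b)) = (a - ψ (φ a)) + (b - ψ (φ b)) := by
        rw [map_add, map_add]; noncomm_ring
      rw [this]
      exact TwoSidedIdeal.add_mem I ha hb
  refine ⟨φ, hsurj, ?_⟩
  ext x
  simp only [SetLike.mem_coe, RingHom.mem_ker]
  constructor
  · intro hx
    have := hkey x
    rwa [hx, map_zero, sub_zero] at this
  · intro hx
    rw [TwoSidedIdeal.mem_span_iff] at hx
    have hmem : x ∈ TwoSidedIdeal.ker φ := by
      apply hx
      rintro _ ⟨r, hr, rfl⟩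
      rw [SetLike.mem_coe, TwoSidedIdeal.mem_ker, hφι]
      have : p r = 0 := Submodule.linearProjOfIsCompl_apply_right' hW.symm hr
      rw [this, map_zero]
    rwa [TwoSidedIdeal.mem_ker] at hmem
end

section
/- Let k be a field of characteristic ≠ 2, V a k-vector space of even finite dimension, and Q a quadratic form on V whose polar bilinear form b is nondegenerate. Then the Clifford algebra C(Q) is a central simple k-algebra: its only two-sided ideals are 0 and C(Q), and its center is k·1. -/
namespace Stmt12Aux

variable {k A : Type*} [Field k] [Ring A] [Algebra k A]
variable {n : ℕ}

/-- noncommutative monomial -/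
def mon (e : Fin n → A) (l : List (Fin n)) : A := (l.map e).prod

/-- the eigenvalue of the monomial `mon e l` under conjugation by `e i` -/
def sgn (l : List (Fin n)) (i : Fin n) : k := (-1 : k) ^ (l.length + l.count i)

variable (e : Fin n → A) {a : Fin n → k}

theorem mon_nil : mon e [] = 1 := rfl

theorem mon_cons (i : Fin n) (l : List (Fin n)) : mon e (i :: l) = e i * mon e l := by
  simp [mon]

theorem mon_append (l l' : List (Fin n)) : mon e (l ++ l') = mon e l * mon e l' := by
  simp [mon]

theorem sgn_mul_self (l : List (Fin n)) (i : Fin n) : (sgn l i : k) * sgn l i = 1 := by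
  rw [sgn, ← pow_add, Even.neg_one_pow ⟨_, rfl⟩]

theorem sgn_eq_or (l : List (Fin n)) (i : Fin n) :
    (sgn l i : k) = 1 ∨ (sgn l i : k) = -1 := by
  rcases Nat.even_or_odd (l.length + l.count i) with h | h
  · exact Or.inl (Even.neg_one_pow h)
  · exact Or.inr (Odd.neg_one_pow h)

variable (hsq : ∀ i, e i * e i = algebraMap k A (a i))
include hsq

section
variable (hanti : ∀ i j, i ≠ j → e i * e j = -(e j * e i))
include hanti

theorem e_mul_mon (l : List (Fin n)) (i : Fin n) :
    e i * mon e l = (sgn l i : k) • (mon e l * e i) := by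
  induction l with
  | nil => simp [mon_nil, sgn]
  | cons j t ih =>
    rcases eq_or_ne j i with rfl | hji
    · have hsgn : (sgn (j :: t) j : k) = sgn t j := by
        simp only [sgn, List.length_cons, List.count_cons_self]
        ring
      have key : mon e t * e j * e j = a j • mon e t := by
        rw [mul_assoc, hsq j, ← Algebra.commutes, ← Algebra.smul_def]
      calc e j * mon e (j :: t) = (e j * e j) * mon e t := by rw [mon_cons, ← mul_assoc]
        _ = a j • mon e t := by rw [hsq j, ← Algebra.smul_def]
        _ = sgn (j :: t) j • (mon e (j :: t) * e j) := by
              rw [hsgn, mon_cons, ih, smul_mul_assoc, key, smul_smul, smul_smul,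
                sgn_mul_self, one_mul]
    · have hsgn : (sgn (j :: t) i : k) = -sgn t i := by
        simp only [sgn, List.length_cons, List.count_cons_of_ne hji]
        ring
      calc e i * mon e (j :: t) = (e i * e j) * mon e t := by rw [mon_cons, ← mul_assoc]
        _ = -(e j * (e i * mon e t)) := by rw [hanti i j (Ne.symm hji), neg_mul, mul_assoc]
        _ = -(e j * ((sgn t i : k) • (mon e t * e i))) := by rw [ih]
        _ = (-sgn t i : k) • (e j * mon e t * e i) := by
              rw [mul_smul_comm, neg_smul, mul_assoc]
        _ = sgn (j :: t) i • (mon e (j :: t) * e i) := by rw [hsgn, mon_cons]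

theorem mon_scalar :
    ∀ (N : ℕ) (l : List (Fin n)), l.length ≤ N → (∀ i, Even (l.count i)) →
      ∃ c : k, mon e l = algebraMap k A c := by
  intro N
  induction N with
  | zero =>
    rintro (_ | ⟨i, t⟩) hlen _
    · exact ⟨1, by simp [mon_nil]⟩
    · simp at hlen
  | succ N ih =>
    rintro (_ | ⟨i, t⟩) hlen hcnt
    · exact ⟨1, by simp [mon_nil]⟩
    · have hit : i ∈ t := by
        rcases hcnt i with ⟨m, hm⟩
        rw [List.count_cons_self] at hm
        rw [← List.count_pos_iff]
        omega
      obtain ⟨t₁, t₂, rfl⟩ := List.append_of_mem hit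
      have key : mon e (i :: (t₁ ++ i :: t₂)) =
          (sgn t₁ i : k) • (a i • mon e (t₁ ++ t₂)) := by
        rw [mon_cons, mon_append, mon_cons, ← mul_assoc, e_mul_mon e hsq hanti,
          smul_mul_assoc, mul_assoc, ← mul_assoc (e i), hsq i, ← Algebra.smul_def,
          mul_smul_comm, ← mon_append]
      have hlen' : (t₁ ++ t₂).length ≤ N := by
        simp only [List.length_cons, List.length_append] at hlen ⊢
        omega
      have hcnt' : ∀ j, Even ((t₁ ++ t₂).count j) := by
        intro j
        have := hcnt j
        rw [Nat.even_iff] at this ⊢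
        rcases eq_or_ne j i with rfl | hji
        · simp only [List.count_cons_self, List.count_append] at this ⊢
          omega
        · simp only [List.count_cons_of_ne (Ne.symm hji), List.count_append] at this ⊢
          omega
      obtain ⟨c', hc'⟩ := ih (t₁ ++ t₂) hlen' hcnt'
      refine ⟨sgn t₁ i * (a i * c'), ?_⟩
      rw [key, hc', map_mul, map_mul, ← Algebra.smul_def, ← Algebra.smul_def]

end

section
variable (ha : ∀ i, a i ≠ 0)
include ha

theorem e_isUnit (i : Fin n) : IsUnit (e i) := by
  refine ⟨⟨e i, (a i)⁻¹ • e i, ?_, ?_⟩, rfl⟩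
  · rw [mul_smul_comm, hsq, Algebra.smul_def, ← map_mul, inv_mul_cancel₀ (ha i), map_one]
  · rw [smul_mul_assoc, hsq, Algebra.smul_def, ← map_mul, inv_mul_cancel₀ (ha i), map_one]

theorem mon_isUnit (l : List (Fin n)) : IsUnit (mon e l) := by
  induction l with
  | nil => exact isUnit_one
  | cons i t iht => rw [mon_cons]; exact (e_isUnit e hsq ha i).mul iht

end

/-- conjugation by `e i`, normalized -/
noncomputable def conjT (e : Fin n → A) (a : Fin n → k) (i : Fin n) : A →ₗ[k] A :=
  (a i)⁻¹ • ((LinearMap.mulRight k (e i)).comp (LinearMap.mulLeft k (e i)))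

omit hsq in
theorem conjT_apply (aa : Fin n → k) (i : Fin n) (x : A) :
    conjT e aa i x = (aa i)⁻¹ • (e i * x * e i) := rfl

section
variable (ha : ∀ i, a i ≠ 0) (hanti : ∀ i j, i ≠ j → e i * e j = -(e j * e i))
include ha hanti

theorem conjT_mon (l : List (Fin n)) (i : Fin n) :
    conjT e a i (mon e l) = (sgn l i : k) • mon e l := by
  rw [conjT_apply, e_mul_mon e hsq hanti, smul_mul_assoc, mul_assoc, hsq,
    ← Algebra.commutes, ← Algebra.smul_def, smul_smul, smul_smul]
  congr 1
  field_simp [ha i]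

theorem proj_span {Λ : Set (List (Fin n))} {x : A}
    (hx : x ∈ Submodule.span k (mon e '' Λ)) (i : Fin n) (s : k) (hs : s * s = 1) :
    x + s • conjT e a i x ∈
      Submodule.span k (mon e '' {l | l ∈ Λ ∧ (sgn l i : k) = s}) := by
  induction hx using Submodule.span_induction with
  | mem y hy =>
    obtain ⟨l, hl, rfl⟩ := hy
    rw [conjT_mon e hsq ha hanti, smul_smul]
    rcases eq_or_ne (sgn l i : k) s with hsl | hsl
    · have : mon e l + (s * sgn l i) • mon e l = (1 + s * sgn l i) • mon e l := by
        rw [add_smul, one_smul]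
      rw [this]
      exact Submodule.smul_mem _ _ (Submodule.subset_span ⟨l, ⟨hl, hsl⟩, rfl⟩)
    · have hneg : (sgn l i : k) = -s := by
        rcases sgn_eq_or (k := k) l i with h1 | h1 <;> rcases mul_self_eq_one_iff.mp hs with h2 | h2 <;>
          simp_all
      rw [hneg]
      have h0 : mon e l + (s * -s) • mon e l = 0 := by
        rw [mul_neg, hs]; simp
      rw [h0]
      exact Submodule.zero_mem _
  | zero => simpa using Submodule.zero_mem _
  | add x y hx hy ihx ihy =>
    have : (x + y) + s • conjT e a i (x + y) =
        (x + s • conjT e a i x) + (y + s • conjT e a i y) := by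
      rw [map_add, smul_add]; abel
    rw [this]; exact Submodule.add_mem _ ihx ihy
  | smul c x hx ihx =>
    have : (c • x) + s • conjT e a i (c • x) = c • (x + s • conjT e a i x) := by
      rw [map_smul, smul_comm s c, smul_add]
    rw [this]; exact Submodule.smul_mem _ _ ihx

end

section
variable (ha : ∀ i, a i ≠ 0) (hanti : ∀ i j, i ≠ j → e i * e j = -(e j * e i))
    (h2 : (2 : k) ≠ 0)
include ha hanti h2

theorem filter_step (I : TwoSidedIdeal A) (Λ : Set (List (Fin n))) (x : A)
    (hx0 : x ≠ 0) (hxI : x ∈ I) (hxs : x ∈ Submodule.span k (mon e '' Λ)) (i : Fin n) :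
    ∃ (s : k) (y : A), y ≠ 0 ∧ y ∈ I ∧
      y ∈ Submodule.span k (mon e '' {l | l ∈ Λ ∧ (sgn l i : k) = s}) := by
  have hTI : conjT e a i x ∈ I := by
    rw [conjT_apply, Algebra.smul_def]
    exact I.mul_mem_left _ _ (I.mul_mem_right _ _ (I.mul_mem_left _ _ hxI))
  have hsum : (x + (1 : k) • conjT e a i x) + (x + (-1 : k) • conjT e a i x)
      = (2 : k) • x := by
    rw [one_smul, neg_smul, one_smul, two_smul]; abel
  have hne : x + (1 : k) • conjT e a i x ≠ 0 ∨ x + (-1 : k) • conjT e a i x ≠ 0 := by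
    by_contra hcon
    push_neg at hcon
    rw [hcon.1, hcon.2, add_zero] at hsum
    exact hx0 (by simpa [h2] using hsum.symm)
  rcases hne with hne | hne
  · exact ⟨1, _, hne, I.add_mem hxI (by rw [one_smul]; exact hTI),
      proj_span e hsq ha hanti hxs i 1 (one_mul 1)⟩
  · exact ⟨-1, _, hne, I.add_mem hxI (by rw [neg_smul, one_smul]; exact I.neg_mem hTI),
      proj_span e hsq ha hanti hxs i (-1) (by norm_num)⟩

theorem filter_ideal (I : TwoSidedIdeal A) :
    ∀ (is : List (Fin n)) (Λ : Set (List (Fin n))) (x : A), x ≠ 0 → x ∈ I →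
      x ∈ Submodule.span k (mon e '' Λ) →
      ∃ (y : A) (Λ' : Set (List (Fin n))), y ≠ 0 ∧ y ∈ I ∧
        y ∈ Submodule.span k (mon e '' Λ') ∧ Λ' ⊆ Λ ∧
        ∀ i ∈ is, ∃ s : k, ∀ l ∈ Λ', (sgn l i : k) = s := by
  intro is
  induction is with
  | nil => exact fun Λ x hx0 hxI hxs => ⟨x, Λ, hx0, hxI, hxs, le_refl _, by simp⟩
  | cons i is ih =>
    intro Λ x hx0 hxI hxs
    obtain ⟨s, y, hy0, hyI, hys⟩ := filter_step e hsq ha hanti h2 I Λ x hx0 hxI hxs i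
    obtain ⟨z, Λ', hz0, hzI, hzs, hsub, hprop⟩ := ih _ y hy0 hyI hys
    refine ⟨z, Λ', hz0, hzI, hzs, fun l hl => (hsub hl).1, ?_⟩
    intro i' hi'
    rcases List.mem_cons.mp hi' with rfl | hi'
    · exact ⟨s, fun l hl => (hsub hl).2⟩
    · exact hprop i' hi'

theorem center_filter (x : A) (hc : ∀ i, conjT e a i x = x) :
    ∀ (is : List (Fin n)) (Λ : Set (List (Fin n))),
      x ∈ Submodule.span k (mon e '' Λ) →
      x ∈ Submodule.span k (mon e '' {l | l ∈ Λ ∧ ∀ i ∈ is, (sgn l i : k) = 1}) := by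
  intro is
  induction is with
  | nil =>
    intro Λ hx
    refine Submodule.span_mono (Set.image_mono ?_) hx
    intro l hl
    exact ⟨hl, by simp⟩
  | cons i is ih =>
    intro Λ hx
    have h1 : x + (1 : k) • conjT e a i x ∈
        Submodule.span k (mon e '' {l | l ∈ Λ ∧ (sgn l i : k) = 1}) :=
      proj_span e hsq ha hanti hx i 1 (one_mul 1)
    rw [hc i, one_smul] at h1
    have h2x : x ∈ Submodule.span k (mon e '' {l | l ∈ Λ ∧ (sgn l i : k) = 1}) := by
      have hxx : x = (2 : k)⁻¹ • (x + x) := by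
        rw [← two_smul k x, smul_smul, inv_mul_cancel₀ h2, one_smul]
      rw [hxx]
      exact Submodule.smul_mem _ _ h1
    have := ih _ h2x
    refine Submodule.span_mono (Set.image_mono ?_) this
    rintro l ⟨⟨hlΛ, hli⟩, hlis⟩
    refine ⟨hlΛ, ?_⟩
    intro i' hi'
    rcases List.mem_cons.mp hi' with rfl | hi'
    · exact hli
    · exact hlis i' hi'

end

omit hsq in
theorem sum_count (l : List (Fin n)) : ∑ i : Fin n, l.count i = l.length := by
  induction l with
  | nil => simp
  | cons i t ih => simp [List.count_cons, Finset.sum_add_distrib, ih]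

omit hsq in
theorem neg_one_pow_parity (h2 : (2 : k) ≠ 0) {p q : ℕ} (h : (-1 : k) ^ p = (-1 : k) ^ q) :
    p % 2 = q % 2 := by
  have hne : (1 : k) ≠ -1 := fun h1 => h2 (by linear_combination h1)
  rcases Nat.even_or_odd p with hp | hp <;> rcases Nat.even_or_odd q with hq | hq
  · rw [Nat.even_iff] at hp hq; omega
  · rw [hp.neg_one_pow, hq.neg_one_pow] at h; exact absurd h hne
  · rw [hp.neg_one_pow, hq.neg_one_pow] at h; exact absurd h.symm hne
  · rw [Nat.odd_iff] at hp hq; omega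

omit hsq in
theorem counts_even (h2 : (2 : k) ≠ 0) (hn : Even n) (l l₀ : List (Fin n))
    (hs : ∀ i, (sgn l i : k) = sgn l₀ i) : ∀ i, Even ((l ++ l₀).count i) := by
  have hmod : ∀ i : Fin n, ((l ++ l₀).count i) % 2 = (l.length + l₀.length) % 2 := by
    intro i
    have := neg_one_pow_parity h2 (hs i)
    rw [List.count_append]
    omega
  have hLsum : ∑ i : Fin n, (l ++ l₀).count i = (l ++ l₀).length := sum_count _
  have hL : (l.length + l₀.length) % 2 = 0 := by
    by_contra hodd
    have h1 : (l.length + l₀.length) % 2 = 1 := by omega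
    have : ((l ++ l₀).length) % 2 = (∑ i : Fin n, ((l ++ l₀).count i % 2)) % 2 := by
      rw [← hLsum, Finset.sum_nat_mod]
    rw [List.length_append] at this
    simp only [hmod, h1] at this
    rw [Finset.sum_const, Finset.card_univ, Fintype.card_fin, smul_eq_mul, mul_one] at this
    rw [Nat.even_iff] at hn
    omega
  intro i
  have h := hmod i
  rw [Nat.even_iff]
  omega

omit hsq in
theorem mul_mem_monSpan {x y : A}
    (hx : x ∈ Submodule.span k (Set.range (mon e)))
    (hy : y ∈ Submodule.span k (Set.range (mon e))) :
    x * y ∈ Submodule.span k (Set.range (mon e)) := by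
  induction hy using Submodule.span_induction with
  | mem y' hy' =>
    induction hx using Submodule.span_induction with
    | mem x' hx' =>
      obtain ⟨l, rfl⟩ := hx'
      obtain ⟨l', rfl⟩ := hy'
      exact Submodule.subset_span ⟨l ++ l', mon_append e l l'⟩
    | zero => rw [zero_mul]; exact Submodule.zero_mem _
    | add x₁ x₂ h₁ h₂ ih₁ ih₂ => rw [add_mul]; exact Submodule.add_mem _ ih₁ ih₂
    | smul c x₁ h₁ ih => rw [smul_mul_assoc]; exact Submodule.smul_mem _ _ ih
  | zero => rw [mul_zero]; exact Submodule.zero_mem _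
  | add y₁ y₂ h₁ h₂ ih₁ ih₂ => rw [mul_add]; exact Submodule.add_mem _ ih₁ ih₂
  | smul c y₁ h₁ ih => rw [mul_smul_comm]; exact Submodule.smul_mem _ _ ih

omit hsq in
theorem clifford_span {kk VV : Type*} [Field kk] [AddCommGroup VV] [Module kk VV]
    {m : ℕ} (Q : QuadraticForm kk VV) (v : Module.Basis (Fin m) kk VV) (x : CliffordAlgebra Q) :
    x ∈ Submodule.span kk (Set.range (mon (fun i => CliffordAlgebra.ι Q (v i)))) := by
  set e' : Fin m → CliffordAlgebra Q := fun i => CliffordAlgebra.ι Q (v i) with he'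
  induction x using CliffordAlgebra.induction with
  | algebraMap r =>
    rw [Algebra.algebraMap_eq_smul_one]
    exact Submodule.smul_mem _ _ (Submodule.subset_span ⟨[], rfl⟩)
  | ι y =>
    have hy : CliffordAlgebra.ι Q y = ∑ i, v.repr y i • e' i := by
      conv_lhs => rw [← v.sum_repr y]
      rw [map_sum]
      simp [he']
    rw [hy]
    refine Submodule.sum_mem _ fun i _ => Submodule.smul_mem _ _ (Submodule.subset_span ⟨[i], ?_⟩)
    simp [mon]
  | mul x y hx hy => exact mul_mem_monSpan _ hx hy
  | add x y hx hy => exact Submodule.add_mem _ hx hy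

end Stmt12Aux

open Stmt12Aux in
/-- Let `k` be a field of characteristic ≠ 2, `V` a `k`-vector space of
even finite dimension, and `Q` a quadratic form whose polar bilinear form is
nondegenerate.  Then `C(Q)` is a central simple `k`-algebra: its only two-sided ideals
are `0` and `C(Q)`, and its center is `k·1`. -/
theorem stmt12 {k V : Type*} [Field k] [AddCommGroup V] [Module k V]
    [FiniteDimensional k V] (h2 : (2 : k) ≠ 0) (Q : QuadraticForm k V)
    (hdeven : Even (Module.finrank k V))
    (hnd : LinearMap.ker Q.polarBilin = ⊥) :
    (∀ I : TwoSidedIdeal (CliffordAlgebra Q), I = ⊥ ∨ I = ⊤) ∧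
    Subalgebra.center k (CliffordAlgebra Q) = ⊥ := by
  haveI : Invertible (2 : k) := invertibleOfNonzero h2
  set n := Module.finrank k V with hn
  have hsymm : Q.polarBilin.IsSymm := by
    refine ⟨fun x y => ?_⟩
    simp only [RingHom.id_apply, QuadraticMap.polarBilin_apply_apply]
    exact QuadraticMap.polar_comm _ _ _
  obtain ⟨v, hv'⟩ := LinearMap.BilinForm.exists_orthogonal_basis hsymm
  have hv : ∀ i j : Fin n, i ≠ j → Q.polarBilin (v i) (v j) = 0 :=
    LinearMap.isOrthoᵢ_def.mp hv'
  set e : Fin n → CliffordAlgebra Q := fun i => CliffordAlgebra.ι Q (v i) with he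
  set a : Fin n → k := fun i => Q (v i) with hadef
  have ha : ∀ i, a i ≠ 0 := by
    intro i h0
    apply v.ne_zero i
    have hker : Q.polarBilin (v i) = 0 := by
      apply v.ext
      intro j
      rcases eq_or_ne j i with rfl | hji
      · simp only [QuadraticMap.polarBilin_apply_apply, LinearMap.zero_apply]
        rw [QuadraticMap.polar_self]
        rw [show Q (v j) = a j from rfl, h0]
        simp
      · simpa using hv i j (Ne.symm hji)
    have : v i ∈ LinearMap.ker Q.polarBilin := LinearMap.mem_ker.mpr hker
    rw [hnd] at this
    simpa using this
  have hsq : ∀ i, e i * e i = algebraMap k (CliffordAlgebra Q) (a i) := fun i =>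
    CliffordAlgebra.ι_sq_scalar Q (v i)
  have hanti : ∀ i j, i ≠ j → e i * e j = -(e j * e i) := by
    intro i j hij
    have hpol : QuadraticMap.polar Q (v i) (v j) = 0 := by
      have := hv i j hij
      simpa [QuadraticMap.polarBilin_apply_apply] using this
    have := CliffordAlgebra.ι_mul_ι_add_swap (Q := Q) (v i) (v j)
    rw [hpol, map_zero] at this
    exact eq_neg_of_add_eq_zero_left this
  have hspan : ∀ x : CliffordAlgebra Q, x ∈ Submodule.span k (Set.range (mon e)) :=
    clifford_span Q v
  constructor
  · -- simplicity
    intro I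
    by_cases hI : I = ⊥
    · exact Or.inl hI
    refine Or.inr ?_
    have hex : ∃ x ∈ I, x ≠ 0 := by
      by_contra hcon
      push_neg at hcon
      apply hI
      refine SetLike.ext fun z => ?_
      rw [TwoSidedIdeal.mem_bot]
      exact ⟨fun hz => hcon z hz, fun hz => hz ▸ I.zero_mem⟩
    obtain ⟨x, hxI, hx0⟩ := hex
    obtain ⟨y, Λ', hy0, hyI, hys, -, hprop⟩ :=
      filter_ideal e hsq ha hanti h2 I (List.finRange n) Set.univ x hx0 hxI
        (by rw [Set.image_univ]; exact hspan x)
    have hΛ : Λ'.Nonempty := by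
      by_contra hcon
      rw [Set.not_nonempty_iff_eq_empty] at hcon
      rw [hcon, Set.image_empty, Submodule.span_empty, Submodule.mem_bot] at hys
      exact hy0 hys
    obtain ⟨l₀, hl₀⟩ := hΛ
    have hsall : ∀ l ∈ Λ', ∀ i, (sgn l i : k) = sgn l₀ i := by
      intro l hl i
      obtain ⟨s, hs⟩ := hprop i (List.mem_finRange i)
      rw [hs l hl, hs l₀ hl₀]
    have hzI : y * mon e l₀ ∈ I := I.mul_mem_right _ _ hyI
    have hz : y * mon e l₀ ∈ LinearMap.range (Algebra.linearMap k (CliffordAlgebra Q)) := by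
      have himg : y * mon e l₀ ∈
          Submodule.span k ((LinearMap.mulRight k (mon e l₀)) '' (mon e '' Λ')) := by
        rw [← Submodule.map_span]
        exact ⟨y, hys, rfl⟩
      refine Submodule.span_le.mpr ?_ himg
      rintro _ ⟨_, ⟨l, hl, rfl⟩, rfl⟩
      have heven : ∀ i, Even ((l ++ l₀).count i) :=
        counts_even h2 hdeven l l₀ (hsall l hl)
      obtain ⟨c, hc⟩ := mon_scalar e hsq hanti (l ++ l₀).length (l ++ l₀) le_rfl heven
      refine ⟨c, ?_⟩
      rw [Algebra.linearMap_apply, ← hc, mon_append]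
      rfl
    obtain ⟨c, hc⟩ := hz
    rw [Algebra.linearMap_apply] at hc
    have hz0 : y * mon e l₀ ≠ 0 := by
      intro h0
      exact hy0 (((mon_isUnit e hsq ha l₀).mul_left_eq_zero).mp h0)
    have hc0 : c ≠ 0 := fun h => hz0 (by rw [← hc, h, map_zero])
    have h1I : (1 : CliffordAlgebra Q) ∈ I := by
      have hmem : (c⁻¹ : k) • (y * mon e l₀) ∈ I := by
        rw [Algebra.smul_def]
        exact I.mul_mem_left _ _ hzI
      rwa [← hc, Algebra.smul_def, ← map_mul, inv_mul_cancel₀ hc0, map_one] at hmem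
    rw [eq_top_iff]
    intro z _
    have := I.mul_mem_left z 1 h1I
    simpa using this
  · -- center
    refine le_antisymm ?_ bot_le
    intro x hx
    have hcomm : ∀ y, y * x = x * y := Subalgebra.mem_center_iff.mp hx
    have hcT : ∀ i, conjT e a i x = x := by
      intro i
      rw [conjT_apply, hcomm (e i), mul_assoc, hsq i, ← Algebra.commutes,
        ← Algebra.smul_def, smul_smul, inv_mul_cancel₀ (ha i), one_smul]
    have hx1 : x ∈ Submodule.span k (mon e ''
        {l | l ∈ (Set.univ : Set (List (Fin n))) ∧ ∀ i ∈ List.finRange n, (sgn l i : k) = 1}) :=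
      center_filter e hsq ha hanti h2 x hcT (List.finRange n) Set.univ
        (by rw [Set.image_univ]; exact hspan x)
    have hle : Submodule.span k (mon e ''
        {l | l ∈ (Set.univ : Set (List (Fin n))) ∧ ∀ i ∈ List.finRange n, (sgn l i : k) = 1}) ≤
        LinearMap.range (Algebra.linearMap k (CliffordAlgebra Q)) := by
      refine Submodule.span_le.mpr ?_
      rintro _ ⟨l, ⟨-, hl⟩, rfl⟩
      have hs0 : ∀ i, (sgn l i : k) = sgn ([] : List (Fin n)) i := by
        intro i
        rw [hl i (List.mem_finRange i)]
        simp [sgn]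
      have heven : ∀ i, Even (l.count i) := by
        intro i
        have := counts_even (n := n) h2 hdeven l [] hs0 i
        simpa using this
      obtain ⟨c, hc⟩ := mon_scalar e hsq hanti l.length l le_rfl heven
      exact ⟨c, by rw [Algebra.linearMap_apply, hc]⟩
    obtain ⟨c, hc⟩ := hle hx1
    rw [Algebra.mem_bot]
    exact ⟨c, by rw [← hc, Algebra.linearMap_apply]⟩
end

section
/- Let k be a field of characteristic ≠ 2, V a finite-dimensional k-vector space, and Q a quadratic form on V whose polar bilinear form b is nondegenerate. Then the Clifford algebra C(Q) is simple as a superalgebra: every two-sided ideal I of C(Q) that is homogeneous with respect to the canonical ℤ/2-grading (i.e. for every a ∈ I, both the even and the odd component of a lie in I) is either 0 or all of C(Q). -/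
open CliffordAlgebra

theorem stmt13_key {k V : Type*} [Field k] [AddCommGroup V] [Module k V]
    (Q : QuadraticForm k V) (v : V) (x : CliffordAlgebra Q) :
    contractLeft (Q := Q) (Q.polarBilin v) x = ι Q v * x - involute x * ι Q v := by
  induction x using CliffordAlgebra.left_induction with
  | algebraMap r => simp [Algebra.commutes]
  | add x y hx hy =>
      simp only [map_add, mul_add, add_mul, hx, hy]
      abel
  | ι_mul x m hx =>
      rw [contractLeft_ι_mul, hx, map_mul, involute_ι, QuadraticMap.polarBilin_apply_apply,
        ← mul_assoc, ι_mul_ι_comm, sub_mul, ← Algebra.smul_def]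
      simp only [mul_sub, neg_mul, mul_assoc]
      abel

section
variable {k V : Type*} [Field k] [AddCommGroup V] [Module k V] (Q : QuadraticForm k V)
variable {n : ℕ}

def stmt13_mon (e : Fin n → V) : List (Fin n) → CliffordAlgebra Q
  | [] => 1
  | i :: t => ι Q (e i) * stmt13_mon e t

variable (e : Fin n → V)

/-- contraction operator -/
noncomputable def stmt13_D (i : Fin n) : CliffordAlgebra Q →ₗ[k] CliffordAlgebra Q :=
  contractLeft (Q := Q) (Q.polarBilin (e i))

/-- projection-ish operator -/
noncomputable def stmt13_E (i : Fin n) : CliffordAlgebra Q →ₗ[k] CliffordAlgebra Q :=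
  (2 * Q (e i))⁻¹ • (stmt13_D Q e i ∘ₗ LinearMap.mulLeft k (ι Q (e i)))

/-- iterated contraction -/
noncomputable def stmt13_DL : List (Fin n) → (CliffordAlgebra Q →ₗ[k] CliffordAlgebra Q)
  | [] => LinearMap.id
  | i :: s => stmt13_DL s ∘ₗ stmt13_D Q e i

/-- product of `E i` over a list -/
noncomputable def stmt13_EL : List (Fin n) → (CliffordAlgebra Q →ₗ[k] CliffordAlgebra Q)
  | [] => LinearMap.id
  | i :: s => stmt13_E Q e i ∘ₗ stmt13_EL s

noncomputable def stmt13_EA : CliffordAlgebra Q →ₗ[k] CliffordAlgebra Q :=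
  stmt13_EL Q e (List.finRange n)

local notation "mon" => stmt13_mon Q e

variable (hor : ∀ i j : Fin n, i ≠ j → QuadraticMap.polar Q (e i) (e j) = 0)
variable (h2 : (2 : k) ≠ 0) (hQ : ∀ i : Fin n, Q (e i) ≠ 0)

include hor in
theorem stmt13_hor2 (i j : Fin n) (hij : i ≠ j) :
    ι Q (e i) * ι Q (e j) = -(ι Q (e j) * ι Q (e i)) := by
  rw [ι_mul_ι_comm, hor i j hij, map_zero, zero_sub]

include hor

theorem stmt13_D_notmem : ∀ (l : List (Fin n)) (i : Fin n), i ∉ l →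
    stmt13_D Q e i (mon l) = 0
  | [], i, _ => by simp [stmt13_mon, stmt13_D]
  | j :: t, i, h => by
    have hij : i ≠ j := fun h' => h (h' ▸ List.mem_cons_self)
    have ht : i ∉ t := fun h' => h (List.mem_cons_of_mem _ h')
    rw [stmt13_mon, stmt13_D, contractLeft_ι_mul, ← stmt13_D, stmt13_D_notmem t i ht,
      QuadraticMap.polarBilin_apply_apply, hor i j hij]
    simp

include h2 hQ

theorem stmt13_D_erase : ∀ (l : List (Fin n)), l.Nodup → ∀ i : Fin n, i ∈ l →
    ∃ u : k, u ≠ 0 ∧ stmt13_D Q e i (mon l) = u • mon (l.erase i)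
  | [], _, i, h => absurd h List.not_mem_nil
  | j :: t, hnd, i, h => by
    rcases eq_or_ne i j with rfl | hij
    · have ht : i ∉ t := (List.nodup_cons.1 hnd).1
      refine ⟨2 * Q (e i), mul_ne_zero h2 (hQ i), ?_⟩
      rw [stmt13_mon, stmt13_D, contractLeft_ι_mul, ← stmt13_D,
        stmt13_D_notmem Q e hor t i ht, QuadraticMap.polarBilin_apply_apply,
        QuadraticMap.polar_self, List.erase_cons_head]
      simp [two_smul, two_mul, add_smul]
    · have ht : i ∈ t := (List.mem_cons.1 h).resolve_left hij
      obtain ⟨u, hu, hDu⟩ := stmt13_D_erase t (List.nodup_cons.1 hnd).2 i ht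
      refine ⟨-u, neg_ne_zero.2 hu, ?_⟩
      rw [stmt13_mon, stmt13_D, contractLeft_ι_mul, ← stmt13_D, hDu,
        QuadraticMap.polarBilin_apply_apply, hor i j hij,
        List.erase_cons_tail (by simp [hij.symm]), stmt13_mon]
      simp [mul_smul_comm]

omit h2 hQ in
theorem stmt13_INS : ∀ (l : List (Fin n)) (i : Fin n), i ∈ l →
    ∃ u : k, ι Q (e i) * mon l = u • mon (l.erase i)
  | [], i, h => absurd h List.not_mem_nil
  | j :: t, i, h => by
    rcases eq_or_ne i j with rfl | hij
    · exact ⟨Q (e i), by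
        rw [stmt13_mon, ← mul_assoc, ι_sq_scalar, List.erase_cons_head, ← Algebra.smul_def]⟩
    · have ht : i ∈ t := (List.mem_cons.1 h).resolve_left hij
      obtain ⟨u, hu⟩ := stmt13_INS t i ht
      refine ⟨-u, ?_⟩
      rw [stmt13_mon, ← mul_assoc, stmt13_hor2 Q e hor i j hij, neg_mul, mul_assoc, hu,
        List.erase_cons_tail (by simp [hij.symm]), stmt13_mon]
      simp [mul_smul_comm]

theorem stmt13_E_notmem (l : List (Fin n)) (i : Fin n) (h : i ∉ l) :
    stmt13_E Q e i (mon l) = mon l := by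
  have : ι Q (e i) * mon l = mon (i :: l) := rfl
  rw [stmt13_E, LinearMap.smul_apply, LinearMap.comp_apply, LinearMap.mulLeft_apply, this,
    stmt13_mon, stmt13_D, contractLeft_ι_mul, ← stmt13_D, stmt13_D_notmem Q e hor l i h,
    QuadraticMap.polarBilin_apply_apply, QuadraticMap.polar_self]
  rw [mul_zero, sub_zero, nsmul_eq_mul, Nat.cast_ofNat, smul_smul,
    inv_mul_cancel₀ (mul_ne_zero h2 (hQ i)), one_smul]

omit h2 hQ in
theorem stmt13_E_mem (l : List (Fin n)) (hnd : l.Nodup) (i : Fin n) (h : i ∈ l) :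
    stmt13_E Q e i (mon l) = 0 := by
  obtain ⟨u, hu⟩ := stmt13_INS Q e hor l i h
  have hne : i ∉ l.erase i := fun hmem => ((hnd.mem_erase_iff.1 hmem).1 rfl)
  rw [stmt13_E, LinearMap.smul_apply, LinearMap.comp_apply, LinearMap.mulLeft_apply, hu,
    map_smul, stmt13_D_notmem Q e hor _ i hne]
  simp

theorem stmt13_EL_mon : ∀ (is : List (Fin n)) (l : List (Fin n)), l.Nodup →
    (stmt13_EL Q e is (mon l) = mon l ∧ ∀ i ∈ is, i ∉ l) ∨
    (stmt13_EL Q e is (mon l) = 0 ∧ ∃ i ∈ is, i ∈ l)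
  | [], l, _ => Or.inl ⟨rfl, by simp⟩
  | i :: is, l, hnd => by
    rcases stmt13_EL_mon is l hnd with ⟨hv, hcond⟩ | ⟨hv, j, hj, hjl⟩
    · rw [stmt13_EL, LinearMap.comp_apply, hv]
      by_cases hi : i ∈ l
      · exact Or.inr ⟨stmt13_E_mem Q e hor l hnd i hi, i, List.mem_cons_self, hi⟩
      · exact Or.inl ⟨stmt13_E_notmem Q e hor h2 hQ l i hi, by
          intro j hj
          rcases List.mem_cons.1 hj with rfl | hj'
          · exact hi
          · exact hcond j hj'⟩
    · rw [stmt13_EL, LinearMap.comp_apply, hv, map_zero]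
      exact Or.inr ⟨rfl, j, List.mem_cons_of_mem _ hj, hjl⟩

theorem stmt13_EA_nil : stmt13_EA Q e (mon []) = 1 := by
  rcases stmt13_EL_mon Q e hor h2 hQ (List.finRange n) [] List.nodup_nil with ⟨hv, _⟩ | ⟨_, i, _, hi⟩
  · exact hv
  · exact absurd hi List.not_mem_nil

theorem stmt13_EA_ne_nil (l : List (Fin n)) (hnd : l.Nodup) (hne : l ≠ []) :
    stmt13_EA Q e (mon l) = 0 := by
  rcases stmt13_EL_mon Q e hor h2 hQ (List.finRange n) l hnd with ⟨_, hcond⟩ | ⟨hv, _⟩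
  · obtain ⟨i, hi⟩ := List.exists_mem_of_ne_nil l hne
    exact absurd hi (hcond i (List.mem_finRange i))
  · exact hv

omit h2 hQ in
theorem stmt13_PS {l l' : List (Fin n)} (p : l.Perm l') (hnd : l.Nodup) :
    ∃ s : k, (s = 1 ∨ s = -1) ∧ mon l' = s • mon l := by
  induction p with
  | nil => exact ⟨1, Or.inl rfl, (one_smul _ _).symm⟩
  | cons x p ih =>
      obtain ⟨s, hs, hmon⟩ := ih (List.nodup_cons.1 hnd).2
      exact ⟨s, hs, by rw [stmt13_mon, stmt13_mon, hmon, mul_smul_comm]⟩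
  | swap x y l =>
      have hxy : y ≠ x := (List.nodup_cons.1 hnd).1 ∘ fun h => h ▸ List.mem_cons_self
      refine ⟨-1, Or.inr rfl, ?_⟩
      rw [stmt13_mon, stmt13_mon, stmt13_mon, stmt13_mon, ← mul_assoc, ← mul_assoc,
        stmt13_hor2 Q e hor x y (fun h => hxy h.symm)]
      simp
  | trans p1 p2 ih1 ih2 =>
      obtain ⟨s1, hs1, hm1⟩ := ih1 hnd
      obtain ⟨s2, hs2, hm2⟩ := ih2 ((p1.nodup_iff).1 hnd)
      refine ⟨s2 * s1, ?_, by rw [hm2, hm1, smul_smul]⟩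
      rcases hs1 with rfl | rfl <;> rcases hs2 with rfl | rfl <;> simp

theorem stmt13_DT : ∀ (l l' : List (Fin n)), l.Nodup → l'.Nodup →
    (l.Perm l' → ∃ u : k, u ≠ 0 ∧ stmt13_EA Q e (stmt13_DL Q e l (mon l')) = u • 1) ∧
    (¬ l.Perm l' → stmt13_EA Q e (stmt13_DL Q e l (mon l')) = 0)
  | [], l', _, hnd' => by
    constructor
    · intro hp
      have : l' = [] := hp.symm.eq_nil
      subst this
      exact ⟨1, one_ne_zero, by rw [stmt13_DL, LinearMap.id_apply,
        stmt13_EA_nil Q e hor h2 hQ, one_smul]⟩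
    · intro hp
      have hne : l' ≠ [] := fun h => hp (h ▸ List.Perm.refl _)
      rw [stmt13_DL, LinearMap.id_apply]
      exact stmt13_EA_ne_nil Q e hor h2 hQ l' hnd' hne
  | i :: s, l', hnd, hnd' => by
    have hnds : s.Nodup := (List.nodup_cons.1 hnd).2
    have hDL : ∀ z, stmt13_DL Q e (i :: s) z = stmt13_DL Q e s (stmt13_D Q e i z) :=
      fun z => rfl
    by_cases hi : i ∈ l'
    · obtain ⟨u, hu, hDu⟩ := stmt13_D_erase Q e hor h2 hQ l' hnd' i hi
      have hperm : l'.Perm (i :: l'.erase i) := List.perm_cons_erase hi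
      have hnde : (l'.erase i).Nodup := hnd'.erase i
      have key : stmt13_EA Q e (stmt13_DL Q e (i :: s) (mon l')) =
          u • stmt13_EA Q e (stmt13_DL Q e s (mon (l'.erase i))) := by
        rw [hDL, hDu, map_smul, map_smul]
      constructor
      · intro hp
        have hps : s.Perm (l'.erase i) :=
          ((hp.trans hperm).cons_inv)
        obtain ⟨u', hu', hval⟩ := (stmt13_DT s (l'.erase i) hnds hnde).1 hps
        exact ⟨u * u', mul_ne_zero hu hu', by rw [key, hval, smul_smul]⟩
      · intro hp
        have hps : ¬ s.Perm (l'.erase i) := fun hps =>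
          hp ((hps.cons i).trans hperm.symm)
        rw [key, (stmt13_DT s (l'.erase i) hnds hnde).2 hps, smul_zero]
    · have h0 : stmt13_D Q e i (mon l') = 0 := stmt13_D_notmem Q e hor l' i hi
      constructor
      · intro hp
        exact absurd (hp.mem_iff.1 (List.mem_cons_self)) hi
      · intro _
        rw [hDL, h0, map_zero, map_zero]

omit hor h2 hQ in
theorem stmt13_mon_append : ∀ (a c : List (Fin n)),
    stmt13_mon Q e (a ++ c) = mon a * mon c
  | [], c => by rw [List.nil_append, stmt13_mon, one_mul]
  | i :: t, c => by
    rw [List.cons_append, stmt13_mon, stmt13_mon, stmt13_mon_append t c, mul_assoc]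

end

section span
variable {k V : Type*} [Field k] [AddCommGroup V] [Module k V] (Q : QuadraticForm k V)
variable {n : ℕ} (b : Module.Basis (Fin n) k V)
variable (hor : ∀ i j : Fin n, i ≠ j → QuadraticMap.polar Q (b i) (b j) = 0)

def stmt13_P : Submodule k (CliffordAlgebra Q) :=
  Submodule.span k {y : CliffordAlgebra Q |
    ∃ l : List (Fin n), l.Nodup ∧ y = stmt13_mon Q ⇑b l}

theorem stmt13_P_mem {y : CliffordAlgebra Q} (l : List (Fin n)) (hnd : l.Nodup)
    (hy : y = stmt13_mon Q ⇑b l) : y ∈ stmt13_P Q b :=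
  Submodule.subset_span ⟨l, hnd, hy⟩

include hor in
theorem stmt13_mul_closed (i : Fin n) (x : CliffordAlgebra Q) (hx : x ∈ stmt13_P Q b) :
    ι Q (b i) * x ∈ stmt13_P Q b := by
  rw [stmt13_P] at hx ⊢
  induction hx using Submodule.span_induction with
  | mem y hy =>
      obtain ⟨l, hnd, rfl⟩ := hy
      by_cases hi : i ∈ l
      · obtain ⟨u, hu⟩ := stmt13_INS Q ⇑b hor l i hi
        rw [hu]
        exact Submodule.smul_mem _ _ (Submodule.subset_span ⟨l.erase i, hnd.erase i, rfl⟩)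
      · exact Submodule.subset_span ⟨i :: l, List.nodup_cons.2 ⟨hi, hnd⟩, rfl⟩
  | zero => rw [mul_zero]; exact Submodule.zero_mem _
  | add y z _ _ hy hz => rw [mul_add]; exact Submodule.add_mem _ hy hz
  | smul r y _ hy => rw [mul_smul_comm]; exact Submodule.smul_mem _ _ hy

include hor in
theorem stmt13_all_mon : ∀ l : List (Fin n), stmt13_mon Q ⇑b l ∈ stmt13_P Q b
  | [] => stmt13_P_mem Q b [] List.nodup_nil rfl
  | i :: t => by
    show ι Q (b i) * stmt13_mon Q ⇑b t ∈ _
    exact stmt13_mul_closed Q b hor i _ (stmt13_all_mon t)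

include hor in
theorem stmt13_span : ∀ x : CliffordAlgebra Q, x ∈ stmt13_P Q b := by
  intro x
  induction x using CliffordAlgebra.induction with
  | algebraMap r =>
      rw [Algebra.algebraMap_eq_smul_one]
      exact Submodule.smul_mem _ _ (stmt13_P_mem Q b [] List.nodup_nil rfl)
  | ι v =>
      have : ι Q v = ∑ i, b.repr v i • ι Q (b i) := by
        conv_lhs => rw [← Module.Basis.sum_repr b v]
        rw [map_sum]
        exact Finset.sum_congr rfl fun i _ => by rw [map_smul]
      rw [this]
      refine Submodule.sum_mem _ fun i _ => Submodule.smul_mem _ _ ?_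
      exact stmt13_P_mem Q b [i] (by simp) (by rw [stmt13_mon, stmt13_mon, mul_one])
  | mul x y hx hy =>
      rw [stmt13_P] at hx
      induction hx using Submodule.span_induction with
      | mem x' hx' =>
          obtain ⟨l, hnd, rfl⟩ := hx'
          rw [stmt13_P] at hy
          induction hy using Submodule.span_induction with
          | mem y' hy' =>
              obtain ⟨l', hnd', rfl⟩ := hy'
              rw [← stmt13_mon_append]
              exact stmt13_all_mon Q b hor _
          | zero => rw [mul_zero]; exact Submodule.zero_mem _
          | add y z _ _ hy hz => rw [mul_add]; exact Submodule.add_mem _ hy hz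
          | smul r y _ hy => rw [mul_smul_comm]; exact Submodule.smul_mem _ _ hy
      | zero => rw [zero_mul]; exact Submodule.zero_mem _
      | add x' z _ _ hx' hz => rw [add_mul]; exact Submodule.add_mem _ hx' hz
      | smul r x' _ hx' => rw [smul_mul_assoc]; exact Submodule.smul_mem _ _ hx'
  | add x y hx hy => exact Submodule.add_mem _ hx hy

end span


section extract
variable {k V : Type*} [Field k] [AddCommGroup V] [Module k V] (Q : QuadraticForm k V)
variable {n : ℕ} (b : Module.Basis (Fin n) k V)
variable (hor : ∀ i j : Fin n, i ≠ j → QuadraticMap.polar Q (b i) (b j) = 0)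
variable (h2 : (2 : k) ≠ 0) (hQ : ∀ i : Fin n, Q (b i) ≠ 0)

include hor h2 hQ in
theorem stmt13_extract (x : CliffordAlgebra Q) (hx : x ≠ 0) :
    ∃ (l : List (Fin n)) (u : k), u ≠ 0 ∧
      stmt13_EA Q ⇑b (stmt13_DL Q ⇑b l x) = u • 1 := by
  by_contra hcon
  push_neg at hcon
  apply hx
  have hxP := stmt13_span Q b hor x
  rw [stmt13_P, Submodule.mem_span_set'] at hxP
  obtain ⟨m, f, g, hsum⟩ := hxP
  have hgl : ∀ i : Fin m, ∃ l : List (Fin n), l.Nodup ∧ (g i : CliffordAlgebra Q)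
      = stmt13_mon Q ⇑b l := fun i => (g i).2
  choose L hLnd hLmon using hgl
  set c : Fin m → List (Fin n) := fun i => (L i).insertionSort (· ≤ ·) with hc
  have hcperm : ∀ i, (c i).Perm (L i) := fun i => List.perm_insertionSort _ _
  have hcnd : ∀ i, (c i).Nodup := fun i => ((hcperm i).nodup_iff).2 (hLnd i)
  have hcsort : ∀ i, (c i).Pairwise (· ≤ ·) := fun i => List.pairwise_insertionSort _ _
  have hsgn : ∀ i : Fin m, ∃ s : k, (s = 1 ∨ s = -1) ∧
      stmt13_mon Q ⇑b (L i) = s • stmt13_mon Q ⇑b (c i) :=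
    fun i => stmt13_PS Q ⇑b hor (hcperm i) (hcnd i)
  choose sgn _hsgn1 hsgn2 using hsgn
  set F : Fin m → k := fun i => f i * sgn i with hF
  have hx2 : x = ∑ i, F i • stmt13_mon Q ⇑b (c i) := by
    rw [← hsum]
    refine Finset.sum_congr rfl fun i _ => ?_
    rw [hLmon i, hsgn2 i, smul_smul]
  -- fiber sums vanish
  have hfib : ∀ t : List (Fin n), t.Pairwise (· ≤ ·) → t.Nodup →
      ∑ i ∈ Finset.univ.filter (fun i => c i = t), F i = 0 := by
    intro t hts htnd
    obtain ⟨u, hu, hval⟩ := (stmt13_DT Q ⇑b hor h2 hQ t t htnd htnd).1 (List.Perm.refl t)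
    have hEA : stmt13_EA Q ⇑b (stmt13_DL Q ⇑b t x) =
        ((∑ i ∈ Finset.univ.filter (fun i => c i = t), F i) * u) • 1 := by
      rw [hx2, map_sum, map_sum]
      have : ∀ i : Fin m, stmt13_EA Q ⇑b (stmt13_DL Q ⇑b t
          (F i • stmt13_mon Q ⇑b (c i))) =
          if c i = t then F i • (u • 1) else 0 := by
        intro i
        rw [map_smul, map_smul]
        by_cases hci : c i = t
        · rw [if_pos hci, hci, hval]
        · have hnp : ¬ t.Perm (c i) := fun hp =>
            hci (List.Perm.eq_of_pairwise' (hcsort i) hts hp.symm)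
          rw [if_neg hci, (stmt13_DT Q ⇑b hor h2 hQ t (c i) htnd (hcnd i)).2 hnp, smul_zero]
      rw [Finset.sum_congr rfl fun i _ => this i, ← Finset.sum_filter,
        ← Finset.sum_smul, smul_smul]
    rcases eq_or_ne ((∑ i ∈ Finset.univ.filter (fun i => c i = t), F i) * u) 0 with h0 | h0
    · exact (mul_eq_zero.1 h0).resolve_right hu
    · exact absurd hEA (hcon t _ h0)
  rw [hx2]
  have h1 : ∑ i : Fin m, F i • stmt13_mon Q ⇑b (c i) =
      ∑ i ∈ Finset.filter (fun i => c i ∈ Finset.image c Finset.univ) Finset.univ,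
        F i • stmt13_mon Q ⇑b (c i) := by
    rw [Finset.filter_true_of_mem fun i _ => Finset.mem_image_of_mem c (Finset.mem_univ i)]
  rw [h1, ← Finset.sum_fiberwise_eq_sum_filter]
  refine Finset.sum_eq_zero fun t ht => ?_
  obtain ⟨i0, _, rfl⟩ := Finset.mem_image.1 ht
  have hgrp : ∑ i ∈ Finset.filter (fun i => c i = c i0) Finset.univ,
      F i • stmt13_mon Q ⇑b (c i)
      = (∑ i ∈ Finset.filter (fun i => c i = c i0) Finset.univ, F i) •
        stmt13_mon Q ⇑b (c i0) := by
    rw [Finset.sum_smul]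
    exact Finset.sum_congr rfl fun i hi => by rw [(Finset.mem_filter.1 hi).2]
  rw [hgrp, hfib (c i0) (hcsort i0) (hcnd i0), zero_smul]
end extract


section ideal
variable {k V : Type*} [Field k] [AddCommGroup V] [Module k V] {Q : QuadraticForm k V}
variable (I : TwoSidedIdeal (CliffordAlgebra Q))
variable (hI : ∀ a ∈ I, ∀ i : ZMod 2,
  (DirectSum.decompose (CliffordAlgebra.evenOdd Q) a i : CliffordAlgebra Q) ∈ I)

theorem stmt13_decomp_sum (a : CliffordAlgebra Q) :
    a = (DirectSum.decompose (evenOdd Q) a 0 : CliffordAlgebra Q) +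
      (DirectSum.decompose (evenOdd Q) a 1 : CliffordAlgebra Q) := by
  classical
  have h1 := DirectSum.sum_support_decompose (evenOdd Q) a
  have h2 : ∑ i ∈ (DirectSum.decompose (evenOdd Q) a).support,
      (DirectSum.decompose (evenOdd Q) a i : CliffordAlgebra Q) =
      ∑ i : ZMod 2, (DirectSum.decompose (evenOdd Q) a i : CliffordAlgebra Q) := by
    refine Finset.sum_subset (Finset.subset_univ _) fun i _ hi => ?_
    rw [DFinsupp.notMem_support_iff.1 hi, ZeroMemClass.coe_zero]
  have h3 : (Finset.univ : Finset (ZMod 2)) = {0, 1} := by decide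
  conv_lhs => rw [← h1, h2]
  rw [h3, Finset.sum_insert (by decide), Finset.sum_singleton]

include hI in
theorem stmt13_I_D {a : CliffordAlgebra Q} (ha : a ∈ I) (v : V) :
    contractLeft (Q := Q) (Q.polarBilin v) a ∈ I := by
  have h0I := hI a ha 0
  have h1I := hI a ha 1
  have hsum := congrArg (contractLeft (Q := Q) (Q.polarBilin v)) (stmt13_decomp_sum a)
  rw [map_add] at hsum
  rw [hsum]
  refine I.add_mem ?_ ?_
  · rw [stmt13_key, involute_eq_of_mem_even (SetLike.coe_mem _)]
    exact I.sub_mem (I.mul_mem_left _ _ h0I) (I.mul_mem_right _ _ h0I)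
  · rw [stmt13_key, involute_eq_of_mem_odd (SetLike.coe_mem _), neg_mul, sub_neg_eq_add]
    exact I.add_mem (I.mul_mem_left _ _ h1I) (I.mul_mem_right _ _ h1I)

theorem stmt13_I_smul {a : CliffordAlgebra Q} (ha : a ∈ I) (r : k) : r • a ∈ I := by
  rw [Algebra.smul_def]
  exact I.mul_mem_left _ _ ha

variable {n : ℕ} (e : Fin n → V)

include hI in
theorem stmt13_I_E {a : CliffordAlgebra Q} (ha : a ∈ I) (i : Fin n) :
    stmt13_E Q e i a ∈ I := by
  rw [stmt13_E, LinearMap.smul_apply, LinearMap.comp_apply, LinearMap.mulLeft_apply]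
  exact stmt13_I_smul I (stmt13_I_D I hI (I.mul_mem_left _ _ ha) (e i)) _

include hI in
theorem stmt13_I_DL : ∀ (l : List (Fin n)) {a : CliffordAlgebra Q}, a ∈ I →
    stmt13_DL Q e l a ∈ I
  | [], a, ha => ha
  | i :: s, a, ha => by
    rw [stmt13_DL, LinearMap.comp_apply]
    exact stmt13_I_DL s (stmt13_I_D I hI ha (e i))

include hI in
theorem stmt13_I_EL : ∀ (is : List (Fin n)) {a : CliffordAlgebra Q}, a ∈ I →
    stmt13_EL Q e is a ∈ I
  | [], a, ha => ha
  | i :: is, a, ha => by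
    rw [stmt13_EL, LinearMap.comp_apply]
    exact stmt13_I_E I hI e (stmt13_I_EL is ha) i

end ideal

/-- Let `k` be a field of characteristic ≠ 2, `V` a finite-dimensional
`k`-vector space, and `Q` a quadratic form whose polar bilinear form is nondegenerate.
Then `C(Q)` is simple as a superalgebra: every two-sided ideal that is homogeneous for
the canonical `ℤ/2`-grading is `0` or all of `C(Q)`. -/
theorem stmt13 {k V : Type*} [Field k] [AddCommGroup V] [Module k V]
    [FiniteDimensional k V] (h2 : (2 : k) ≠ 0) (Q : QuadraticForm k V)
    (hnd : LinearMap.ker Q.polarBilin = ⊥) :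
    ∀ I : TwoSidedIdeal (CliffordAlgebra Q),
      (∀ a ∈ I, ∀ i : ZMod 2,
        (DirectSum.decompose (CliffordAlgebra.evenOdd Q) a i : CliffordAlgebra Q) ∈ I) →
      I = ⊥ ∨ I = ⊤ := by
  intro I hI
  by_cases hbot : I = ⊥
  · exact Or.inl hbot
  right
  have hex : ∃ x, x ∈ I ∧ x ≠ 0 := by
    by_contra h
    push_neg at h
    exact hbot <| SetLike.ext fun z =>
      ⟨fun hz => (TwoSidedIdeal.mem_bot _).2 (h z hz),
       fun hz => by rw [(TwoSidedIdeal.mem_bot _).1 hz]; exact I.zero_mem⟩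
  obtain ⟨x, hxI, hx0⟩ := hex
  haveI : Invertible (2 : k) := invertibleOfNonzero h2
  have hsymm : Q.polarBilin.IsSymm := ⟨fun u v => by
    simp only [QuadraticMap.polarBilin_apply_apply]
    exact QuadraticMap.polar_comm _ u v⟩
  obtain ⟨b, hb⟩ := LinearMap.BilinForm.exists_orthogonal_basis hsymm
  have hor : ∀ i j, i ≠ j → QuadraticMap.polar Q (b i) (b j) = 0 := fun i j hij => by
    have h := (LinearMap.isOrthoᵢ_def.mp hb) i j hij
    rwa [QuadraticMap.polarBilin_apply_apply] at h
  have hQe : ∀ i, Q (b i) ≠ 0 := by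
    intro i hQi
    have hzero : Q.polarBilin (b i) = 0 := by
      refine b.ext fun j => ?_
      rw [LinearMap.zero_apply, QuadraticMap.polarBilin_apply_apply]
      rcases eq_or_ne i j with rfl | hij
      · rw [QuadraticMap.polar_self, hQi, smul_zero]
      · exact hor i j hij
    have hmem : b i ∈ LinearMap.ker Q.polarBilin := LinearMap.mem_ker.2 hzero
    rw [hnd] at hmem
    exact b.ne_zero i (Submodule.mem_bot k |>.1 hmem)
  obtain ⟨l, u, hu, hval⟩ := stmt13_extract Q b hor h2 hQe x hx0
  have hmemI : stmt13_EA Q ⇑b (stmt13_DL Q ⇑b l x) ∈ I :=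
    stmt13_I_EL I hI ⇑b _ (stmt13_I_DL I hI ⇑b l hxI)
  rw [hval] at hmemI
  have hone : (1 : CliffordAlgebra Q) ∈ I := by
    have h1 := stmt13_I_smul I hmemI u⁻¹
    rwa [smul_smul, inv_mul_cancel₀ hu, one_smul] at h1
  exact I.eq_top hone
end
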